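/- arXiv:2011.10261 — 13 statements merged into one kernel-verified Lean document; each statement's English description precedes it below -/
import Mathlib

section
/- If (κ,λ) is a pinning down pair for a topological space X, |X| ≤ κ, and κ equals the cofinality of the partial order ([κ]^λ, ⊆), then X has a dense subset of cardinality at most λ. -/
open Cardinal Topology Set

universe u

def PinningDownPair (X : Type u) [TopologicalSpace X] (k lam : Cardinal.{u}) : Prop :=
  ∀ 𝒰 : Set (Set X), (∀ U ∈ 𝒰, IsOpen U ∧ U.Nonempty) → #𝒰 ≤ k →
    ∃ B : Set X, #B ≤ lam ∧ ∀ U ∈ 𝒰, (B ∩ U).Nonempty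

/-- The cofinality of the partial order ([κ]^λ, ⊆) of λ-sized subsets of (a set of size) κ:
the least cardinality of a family of λ-sized subsets that is cofinal under inclusion. -/
noncomputable def cofSubsets (k lam : Cardinal.{u}) : Cardinal.{u} :=
  sInf {c | ∃ 𝒜 : Set (Set k.out), #𝒜 = c ∧ (∀ A ∈ 𝒜, #A = lam) ∧
    ∀ S : Set k.out, #S = lam → ∃ A ∈ 𝒜, S ⊆ A}

theorem stmt_0 {X : Type u} [TopologicalSpace X] (k lam : Cardinal.{u})
    (hlam : ℵ₀ ≤ lam) (hkl : lam < k)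
    (hpd : PinningDownPair X k lam) (hX : #X ≤ k)
    (hcof : k = cofSubsets k lam) :
    ∃ D : Set X, Dense D ∧ #D ≤ lam := by
  by_contra h
  push_neg at h
  -- h : ∀ D, Dense D → lam < #D
  -- embedding of X into k.out
  have hmk : #(Quotient.out k) = k := Cardinal.mk_out k
  have hXk : #X ≤ #(Quotient.out k) := by rw [hmk]; exact hX
  obtain ⟨f⟩ := (Cardinal.le_def _ _).mp hXk
  -- the defining set of cofSubsets is nonempty
  have hne : {c | ∃ 𝒜 : Set (Set k.out), #𝒜 = c ∧ (∀ A ∈ 𝒜, #A = lam) ∧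
      ∀ S : Set k.out, #S = lam → ∃ A ∈ 𝒜, S ⊆ A}.Nonempty := by
    refine ⟨#{A : Set (Quotient.out k) | #A = lam}, {A | #A = lam}, rfl, fun A hA => hA, ?_⟩
    exact fun S hS => ⟨S, hS, subset_rfl⟩
  have hmem := csInf_mem hne
  rw [← cofSubsets, ← hcof] at hmem
  obtain ⟨𝒜, h𝒜card, h𝒜lam, h𝒜cof⟩ := hmem
  -- for each A, preimage has card ≤ lam, hence not dense
  have hpre : ∀ A ∈ 𝒜, #(f ⁻¹' A : Set X) ≤ lam := by
    intro A hA
    calc #(f ⁻¹' A : Set X) ≤ #A := Cardinal.mk_preimage_of_injective f A f.injective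
      _ = lam := h𝒜lam A hA
  have hU : ∀ A ∈ 𝒜, IsOpen ((closure (f ⁻¹' A))ᶜ : Set X) ∧
      ((closure (f ⁻¹' A))ᶜ : Set X).Nonempty := by
    intro A hA
    refine ⟨isClosed_closure.isOpen_compl, ?_⟩
    by_contra hcl
    rw [Set.not_nonempty_iff_eq_empty, compl_empty_iff] at hcl
    have hd : Dense (f ⁻¹' A) := by rw [dense_iff_closure_eq]; exact hcl
    exact absurd (hpre A hA) (not_le.mpr (h _ hd))
  -- apply pinning down
  set g : Set (Quotient.out k) → Set X := fun A => (closure (f ⁻¹' A))ᶜ with hg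
  have hcard𝒰 : #(g '' 𝒜) ≤ k := by
    calc #(g '' 𝒜) ≤ #𝒜 := Cardinal.mk_image_le
      _ = k := h𝒜card
  obtain ⟨B, hBcard, hBmeet⟩ := hpd (g '' 𝒜)
    (by rintro U ⟨A, hA, rfl⟩; exact hU A hA) hcard𝒰
  -- extend f '' B to a lam-sized subset of k.out
  have hlamk : lam ≤ #(Quotient.out k) := by rw [hmk]; exact hkl.le
  obtain ⟨T, hT⟩ := Cardinal.le_mk_iff_exists_set.mp hlamk
  have hScard : #(f '' B ∪ T : Set (Quotient.out k)) = lam := by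
    apply le_antisymm
    · calc #(f '' B ∪ T : Set (Quotient.out k)) ≤ #(f '' B : Set (Quotient.out k)) + #T :=
          Cardinal.mk_union_le _ _
        _ ≤ lam + lam := by
            refine add_le_add ?_ hT.le
            calc #(f '' B : Set (Quotient.out k)) ≤ #B := Cardinal.mk_image_le
              _ ≤ lam := hBcard
        _ = lam := Cardinal.add_eq_self hlam
    · rw [← hT]; exact Cardinal.mk_le_mk_of_subset subset_union_right
  obtain ⟨A, hA, hSA⟩ := h𝒜cof _ hScard
  obtain ⟨x, hxB, hxU⟩ := hBmeet (g A) ⟨A, hA, rfl⟩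
  apply hxU
  have : f x ∈ A := hSA (Or.inl ⟨x, hxB, rfl⟩)
  exact subset_closure this
end

section
/- If X is a topological space with |X| ≤ 𝔠 (the cardinality of the continuum) and (𝔠, ω) is a pinning down pair for X, then X is separable. -/
open Cardinal Topology Set

universe u

theorem stmt_1 {X : Type u} [TopologicalSpace X]
    (hX : #X ≤ Cardinal.continuum.{u})
    (hpd : PinningDownPair X Cardinal.continuum.{u} ℵ₀) :
    TopologicalSpace.SeparableSpace X := by
  by_contra hsep
  -- family of complements of closures of countable sets
  set 𝒰 : Set (Set X) := (fun s : Set X => (closure s)ᶜ) '' {s : Set X | #s ≤ ℵ₀} with h𝒰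
  have hopen : ∀ U ∈ 𝒰, IsOpen U ∧ U.Nonempty := by
    rintro U ⟨s, hs, rfl⟩
    refine ⟨isClosed_closure.isOpen_compl, ?_⟩
    rw [nonempty_compl]
    intro hdense
    exact hsep ⟨⟨s, le_aleph0_iff_set_countable.mp hs, dense_iff_closure_eq.mpr hdense⟩⟩
  have hcard : #𝒰 ≤ Cardinal.continuum.{u} := by
    refine le_trans mk_image_le ?_
    have h1 : #{s : Set X | #s ≤ ℵ₀} ≤ max #X ℵ₀ ^ (ℵ₀ : Cardinal.{u}) :=
      mk_bounded_set_le X ℵ₀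
    refine h1.trans ?_
    have : max #X ℵ₀ ≤ Cardinal.continuum.{u} :=
      max_le hX (aleph0_le_continuum)
    calc max #X ℵ₀ ^ (ℵ₀ : Cardinal.{u}) ≤ Cardinal.continuum.{u} ^ (ℵ₀ : Cardinal.{u}) :=
          power_le_power_right this
      _ = Cardinal.continuum.{u} := continuum_power_aleph0
  obtain ⟨B, hB, hmeet⟩ := hpd 𝒰 hopen hcard
  have hBU : (closure B)ᶜ ∈ 𝒰 := ⟨B, hB, rfl⟩
  obtain ⟨x, hxB, hxc⟩ := hmeet _ hBU
  exact hxc (subset_closure hxB)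
end

section
/- If X is a topological space with |X| < ℵ_ω and (|X|, λ) is a pinning down pair for X, then d(X) ≤ λ. -/
open Cardinal Topology Set

universe u

lemma cofinal_family {X : Type u} (lam : Cardinal.{u}) (hlam : ℵ₀ ≤ lam) :
    ∀ (n : ℕ) (S : Set X), #S ≤ aleph n →
      ∃ F : Set (Set X), #F ≤ max lam (aleph n) ∧ (∀ A ∈ F, #A ≤ lam) ∧
        ∀ A : Set X, A ⊆ S → #A ≤ lam → ∃ B ∈ F, A ⊆ B := by
  intro n
  induction n with
  | zero =>
    intro S hS
    refine ⟨{S}, by simpa using le_max_of_le_left (one_le_aleph0.trans hlam), ?_, ?_⟩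
    · intro A hA; simp only [mem_singleton_iff] at hA; subst hA
      exact hS.trans (by simpa using hlam)
    · intro A hA _; exact ⟨S, rfl, hA⟩
  | succ n ih =>
    intro S hS
    by_cases hSlam : #S ≤ lam
    · refine ⟨{S}, by simpa using le_max_of_le_left (one_le_aleph0.trans hlam), ?_, ?_⟩
      · intro A hA; simp only [mem_singleton_iff] at hA; subst hA; exact hSlam
      · intro A hA _; exact ⟨S, rfl, hA⟩
    by_cases hSn : #S ≤ aleph n
    · obtain ⟨F, h1, h2, h3⟩ := ih S hSn
      exact ⟨F, h1.trans (max_le_max le_rfl (aleph_le_aleph.2 (by norm_cast; omega))), h2, h3⟩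
    · have hSeq : #S = aleph (n + 1) := by
        refine le_antisymm hS ?_
        rw [Ordinal.add_one_eq_succ, aleph_succ]
        exact Order.succ_le_of_lt (lt_of_not_ge hSn)
      set κ := aleph ((n : ℕ) + 1) with hκ
      have hκs : κ = Order.succ (aleph (n : Ordinal)) := by
        rw [hκ, Ordinal.add_one_eq_succ, aleph_succ]
      have hreg : κ.IsRegular := hκs ▸ isRegular_succ (aleph0_le_aleph _)
      have hmk : #S = #κ.ord.ToType := by
        rw [mk_toType, Cardinal.card_ord, hSeq]
      obtain ⟨e⟩ := Cardinal.eq.1 hmk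
      have hseg : ∀ x : κ.ord.ToType,
          ∃ F : Set (Set X), #F ≤ max lam (aleph n) ∧ (∀ A ∈ F, #A ≤ lam) ∧
            ∀ A : Set X, A ⊆ (Subtype.val '' (e.symm '' Iio x)) → #A ≤ lam →
              ∃ B ∈ F, A ⊆ B := by
        intro x
        apply ih
        have h1 : #(Subtype.val '' (e.symm '' Iio x) : Set X) ≤ #(Iio x) :=
          mk_image_le.trans mk_image_le
        have : #(Subtype.val '' (e.symm '' Iio x) : Set X) < κ :=
          h1.trans_lt (mk_Iio_ord_toType x)
        exact Order.lt_succ_iff.1 (lt_of_lt_of_eq this hκs)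
      choose F hF1 hF2 hF3 using hseg
      refine ⟨⋃ x, F x, ?_, ?_, ?_⟩
      · calc #(⋃ x, F x) ≤ #κ.ord.ToType * ⨆ x, #(F x) := mk_iUnion_le _
          _ ≤ κ * max lam (aleph n) := by
              apply mul_le_mul'
              · rw [mk_toType, Cardinal.card_ord]
              · exact ciSup_le' hF1
          _ ≤ max lam κ * max lam κ := by
              apply mul_le_mul' (le_max_right _ _)
              exact max_le_max le_rfl (aleph_le_aleph.2 (by norm_cast; omega))
          _ = max lam κ := mul_eq_self (hlam.trans (le_max_left _ _))
      · intro A hA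
        simp only [mem_iUnion] at hA
        obtain ⟨x, hx⟩ := hA
        exact hF2 x A hx
      · intro A hAS hAcard
        haveI : IsWellOrder κ.ord.ToType (· < ·) := isWellOrder_lt
        have hbd : Set.Bounded (· < ·) (range fun a : A => e ⟨a, hAS a.2⟩) := by
          have hlt : #(range fun a : A => e ⟨a, hAS a.2⟩) < Order.cof κ.ord.ToType := by
            rw [Ordinal.cof_toType, hreg.cof_eq]
            calc #(range fun a : A => e ⟨a, hAS a.2⟩) ≤ #A := mk_range_le
              _ ≤ lam := hAcard
              _ < κ := hSeq ▸ lt_of_not_ge hSlam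
          have hnc : ¬ IsCofinal (range fun a : A => e ⟨a, hAS a.2⟩) :=
            fun h => absurd (Order.cof_le h) (not_le.2 hlt)
          simp only [IsCofinal, not_forall, not_exists, not_and, not_le] at hnc
          obtain ⟨x, hx⟩ := hnc
          exact ⟨x, hx⟩
        obtain ⟨x, hx⟩ := hbd
        have hsub : A ⊆ Subtype.val '' (e.symm '' Iio x) := by
          intro a ha
          refine ⟨e.symm (e ⟨a, hAS ha⟩), ⟨e ⟨a, hAS ha⟩, ?_, rfl⟩, by simp⟩
          exact hx _ ⟨⟨a, ha⟩, rfl⟩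
        obtain ⟨B, hB, hAB⟩ := hF3 x A hsub hAcard
        exact ⟨B, mem_iUnion.2 ⟨x, hB⟩, hAB⟩

theorem stmt_2 {X : Type u} [TopologicalSpace X] (lam : Cardinal.{u})
    (hlam : ℵ₀ ≤ lam) (hkl : lam < #X)
    (hX : #X < Cardinal.aleph Ordinal.omega0)
    (hpd : PinningDownPair X (#X) lam) :
    ∃ D : Set X, Dense D ∧ #D ≤ lam := by
  -- #X = aleph n for some n
  obtain ⟨o, ho⟩ := (let ⟨o, h⟩ := Cardinal.mem_range_aleph_iff.2 (hlam.trans hkl.le); ⟨o, h.symm⟩ : ∃ o, #X = aleph o)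
  have ho' : o < Ordinal.omega0 := by
    rw [ho] at hX; exact aleph_lt_aleph.1 hX
  obtain ⟨n, hn⟩ := Ordinal.lt_omega0.1 ho'
  have hXn : #X = aleph n := by rw [ho, hn]
  obtain ⟨F, hF1, hF2, hF3⟩ := cofinal_family (X := X) lam hlam n univ (by rw [← mk_univ] at hXn; exact hXn.le)
  by_contra hcon
  push_neg at hcon
  -- every A ∈ F is not dense; pick open set missing it
  have hU : ∀ A ∈ F, ∃ U : Set X, IsOpen U ∧ U.Nonempty ∧ A ∩ U = ∅ := by
    intro A hA
    have : ¬ Dense A := fun hd => absurd (hcon A hd) (not_lt.2 (hF2 A hA))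
    rw [dense_iff_inter_open] at this
    push_neg at this
    obtain ⟨U, hUo, hUne, hUA⟩ := this
    exact ⟨U, hUo, hUne, by rw [inter_comm]; exact hUA⟩
  choose! U hUo hUne hUA using hU
  set 𝒰 : Set (Set X) := (fun A => U A) '' F with h𝒰
  have h𝒰card : #𝒰 ≤ #X := by
    apply mk_image_le.trans
    rw [hXn]
    refine hF1.trans (max_le (hkl.le.trans hXn.le |>.trans ?_) le_rfl)
    exact le_rfl
  obtain ⟨B, hB1, hB2⟩ := hpd 𝒰 (by
    rintro V ⟨A, hA, rfl⟩
    exact ⟨hUo A hA, hUne A hA⟩) h𝒰card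
  obtain ⟨C, hC, hBC⟩ := hF3 B (subset_univ B) hB1
  have := hB2 (U C) ⟨C, hC, rfl⟩
  obtain ⟨x, hxB, hxU⟩ := this
  have : x ∈ C ∩ U C := ⟨hBC hxB, hxU⟩
  rw [hUA C hC] at this
  exact this
end

section
/- If ((2^λ)⁺, λ) is a pinning down pair for a topological space X, then |RO(X)| ≤ 2^λ, where RO(X) is the family of regular open subsets of X. -/
open Cardinal Topology Set

universe u

theorem stmt_6 {X : Type u} [TopologicalSpace X] (lam : Cardinal.{u}) (hlam : ℵ₀ ≤ lam)
    (hpd : PinningDownPair X (Order.succ (2 ^ lam)) lam) :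
    #{U : Set X | U = interior (closure U)} ≤ 2 ^ lam := by
  by_contra h
  push_neg at h
  have hκle : Order.succ ((2:Cardinal.{u}) ^ lam) ≤ #{U : Set X | U = interior (closure U)} :=
    Order.succ_le_of_lt h
  obtain ⟨F, hFsub, hFcard⟩ := Cardinal.le_mk_iff_exists_subset.mp hκle
  have hinfty : ℵ₀ ≤ (2 : Cardinal.{u}) ^ lam := hlam.trans (Cardinal.cantor lam).le
  have hκinf : ℵ₀ ≤ Order.succ ((2:Cardinal.{u}) ^ lam) := hinfty.trans (Order.le_succ _)
  -- family of nonempty differences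
  set 𝒰 : Set (Set X) :=
    {W | (∃ U ∈ F, ∃ V ∈ F, W = U ∩ (closure V)ᶜ) ∧ W.Nonempty} with h𝒰
  have hreg : ∀ U ∈ F, U = interior (closure U) := fun U hU => hFsub hU
  have hopen : ∀ U ∈ 𝒰, IsOpen U ∧ U.Nonempty := by
    rintro W ⟨⟨U, hU, V, hV, rfl⟩, hne⟩
    refine ⟨IsOpen.inter ?_ isClosed_closure.isOpen_compl, hne⟩
    rw [hreg U hU]; exact isOpen_interior
  have hcard𝒰 : #𝒰 ≤ Order.succ ((2:Cardinal.{u}) ^ lam) := by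
    have hsub : 𝒰 ⊆ Set.range (fun p : ↥F × ↥F => (p.1 : Set X) ∩ (closure (p.2 : Set X))ᶜ) := by
      rintro W ⟨⟨U, hU, V, hV, rfl⟩, -⟩
      exact ⟨(⟨U, hU⟩, ⟨V, hV⟩), rfl⟩
    calc #𝒰 ≤ #(Set.range (fun p : ↥F × ↥F => (p.1 : Set X) ∩ (closure (p.2 : Set X))ᶜ)) :=
          Cardinal.mk_le_mk_of_subset hsub
      _ ≤ #(↥F × ↥F) := Cardinal.mk_range_le
      _ = #↥F * #↥F := by simp [Cardinal.mk_prod]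
      _ = Order.succ ((2:Cardinal.{u}) ^ lam) := by
          rw [hFcard]; exact Cardinal.mul_eq_self hκinf
  obtain ⟨B, hB, hBmeet⟩ := hpd 𝒰 hopen hcard𝒰
  -- the trace map is injective
  have key : ∀ U ∈ F, ∀ V ∈ F, (∀ b ∈ B, b ∈ U ↔ b ∈ V) → U ⊆ V := by
    intro U hU V hV htr
    have hsubcl : U ⊆ closure V := by
      by_contra hc
      rw [Set.not_subset] at hc
      obtain ⟨x, hxU, hxV⟩ := hc
      have hW : (U ∩ (closure V)ᶜ) ∈ 𝒰 := ⟨⟨U, hU, V, hV, rfl⟩, ⟨x, hxU, hxV⟩⟩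
      obtain ⟨b, hbB, hbU, hbV⟩ := hBmeet _ hW
      exact hbV (subset_closure ((htr b hbB).mp hbU))
    calc U = interior (closure U) := hreg U hU
      _ ⊆ interior (closure V) := interior_mono (closure_minimal hsubcl isClosed_closure)
      _ = V := (hreg V hV).symm
  have finj : Function.Injective (fun U : ↥F => {b : ↥B | (b : X) ∈ (U : Set X)}) := by
    rintro ⟨U, hU⟩ ⟨V, hV⟩ hUV
    have hUV' : {b : ↥B | (b : X) ∈ U} = {b : ↥B | (b : X) ∈ V} := hUV
    have htr : ∀ b ∈ B, b ∈ U ↔ b ∈ V := by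
      intro b hb
      constructor
      · intro hbU
        have : (⟨b, hb⟩ : ↥B) ∈ {b : ↥B | (b : X) ∈ U} := hbU
        rw [hUV'] at this; exact this
      · intro hbV
        have : (⟨b, hb⟩ : ↥B) ∈ {b : ↥B | (b : X) ∈ V} := hbV
        rw [← hUV'] at this; exact this
    exact Subtype.ext (Set.Subset.antisymm (key U hU V hV htr)
      (key V hV U hU (fun b hb => (htr b hb).symm)))
  have : Order.succ ((2:Cardinal.{u}) ^ lam) ≤ 2 ^ lam := by
    calc Order.succ ((2:Cardinal.{u}) ^ lam) = #↥F := hFcard.symm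
      _ ≤ #(Set ↥B) := Cardinal.mk_le_of_injective finj
      _ = 2 ^ #↥B := Cardinal.mk_set
      _ ≤ 2 ^ lam := Cardinal.power_le_power_left two_ne_zero hB
  exact absurd this (not_le.mpr (Order.lt_succ_of_not_isMax (not_isMax _)))
end

section
/- If ((2^λ)⁺, λ) is a pinning down pair for a topological space X and the nonempty regular open sets form a π-base for X, then d(X) ≤ λ. -/
open Cardinal Topology Set

universe u

theorem stmt_7 {X : Type u} [TopologicalSpace X] (lam : Cardinal.{u}) (hlam : ℵ₀ ≤ lam)
    (hpd : PinningDownPair X (Order.succ (2 ^ lam)) lam)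
    (hpib : ∀ W : Set X, IsOpen W → W.Nonempty →
      ∃ U : Set X, U = interior (closure U) ∧ U.Nonempty ∧ U ⊆ W) :
    ∃ D : Set X, Dense D ∧ #D ≤ lam := by
  classical
  set RO : Set (Set X) := {U | U = interior (closure U) ∧ U.Nonempty} with hRO
  have hROopen : ∀ U ∈ RO, IsOpen U ∧ U.Nonempty := by
    rintro U ⟨hU, hne⟩
    exact ⟨hU ▸ isOpen_interior, hne⟩
  by_cases hcard : #RO ≤ Order.succ (2 ^ lam)
  · obtain ⟨B, hB, hmeet⟩ := hpd RO hROopen hcard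
    refine ⟨B, ?_, hB⟩
    rw [dense_iff_inter_open]
    intro W hW hWne
    obtain ⟨U, hUro, hUne, hUW⟩ := hpib W hW hWne
    obtain ⟨x, hxB, hxU⟩ := hmeet U ⟨hUro, hUne⟩
    exact ⟨x, hUW hxU, hxB⟩
  · exfalso
    push_neg at hcard
    obtain ⟨S, hSsub, hScard⟩ := Cardinal.le_mk_iff_exists_subset.mp hcard.le
    have hκinf : ℵ₀ ≤ Order.succ (2 ^ lam) :=
      le_trans hlam (le_trans (Cardinal.cantor lam).le (Order.le_succ _))
    set 𝒱 : Set (Set X) := {W | W.Nonempty ∧ ∃ U ∈ S, ∃ V ∈ S, W = U \ closure V} with h𝒱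
    have h𝒱open : ∀ W ∈ 𝒱, IsOpen W ∧ W.Nonempty := by
      rintro W ⟨hne, U, hU, V, hV, rfl⟩
      exact ⟨((hROopen U (hSsub hU)).1).sdiff isClosed_closure, hne⟩
    have h𝒱card : #𝒱 ≤ Order.succ (2 ^ lam) := by
      have key : ∀ W : ↥𝒱, ∃ p : ↥S × ↥S,
          (W : Set X) = (p.1 : Set X) \ closure (p.2 : Set X) := by
        rintro ⟨W, hne, U, hU, V, hV, rfl⟩
        exact ⟨(⟨U, hU⟩, ⟨V, hV⟩), rfl⟩
      choose g hg using key
      have hginj : Function.Injective g := by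
        intro W₁ W₂ heq
        apply Subtype.ext
        rw [hg W₁, hg W₂, heq]
      calc #𝒱 ≤ #(↥S × ↥S) := Cardinal.mk_le_of_injective hginj
        _ = #S * #S := by rw [Cardinal.mk_prod]; simp
        _ = Order.succ (2 ^ lam) := by rw [hScard, Cardinal.mul_eq_self hκinf]
    obtain ⟨B, hB, hmeet⟩ := hpd 𝒱 h𝒱open h𝒱card
    have hdiff : ∀ U ∈ S, ∀ V ∈ S, (U \ closure V).Nonempty →
        ∃ b ∈ B, b ∈ U ∧ b ∉ V := by
      intro U hU V hV hne
      obtain ⟨b, hbB, hbW⟩ := hmeet (U \ closure V) ⟨hne, U, hU, V, hV, rfl⟩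
      exact ⟨b, hbB, hbW.1, fun h => hbW.2 (subset_closure h)⟩
    -- the trace map on B is injective on S
    have hfinj : Function.Injective (fun U : ↥S => {b : ↥B | (b : X) ∈ (U : Set X)}) := by
      rintro ⟨U, hU⟩ ⟨V, hV⟩ hfeq
      simp only at hfeq
      apply Subtype.ext
      by_contra hUV
      have hUro := hSsub hU
      have hVro := hSsub hV
      have hUopen := (hROopen U hUro).1
      have hVopen := (hROopen V hVro).1
      have hcases : (U \ closure V).Nonempty ∨ (V \ closure U).Nonempty := by
        by_contra h
        push_neg at h
        obtain ⟨h1, h2⟩ := h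
        rw [Set.diff_eq_empty] at h1 h2
        apply hUV
        apply Set.Subset.antisymm
        · calc U = interior U := hUopen.interior_eq.symm
            _ ⊆ interior (closure V) := interior_mono h1
            _ = V := hVro.1.symm
        · calc V = interior V := hVopen.interior_eq.symm
            _ ⊆ interior (closure U) := interior_mono h2
            _ = U := hUro.1.symm
      rcases hcases with hne | hne
      · obtain ⟨b, hbB, hbU, hbV⟩ := hdiff U hU V hV hne
        have : (⟨b, hbB⟩ : ↥B) ∈ {b : ↥B | (b : X) ∈ U} := hbU
        rw [hfeq] at this
        exact hbV this
      · obtain ⟨b, hbB, hbV, hbU⟩ := hdiff V hV U hU hne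
        have : (⟨b, hbB⟩ : ↥B) ∈ {b : ↥B | (b : X) ∈ V} := hbV
        rw [← hfeq] at this
        exact hbU this
    have hle : Order.succ ((2 : Cardinal) ^ lam) ≤ (2 : Cardinal) ^ lam := by
      calc Order.succ (2 ^ lam) = #S := hScard.symm
        _ ≤ #(Set ↥B) := Cardinal.mk_le_of_injective hfinj
        _ = (2 : Cardinal) ^ #B := Cardinal.mk_set
        _ ≤ (2 : Cardinal) ^ lam := Cardinal.power_le_power_left two_ne_zero hB
    exact absurd hle (not_le.mpr (Order.lt_succ _))
end

section
/- If (2^{2^λ}, λ) is a pinning down pair for a Hausdorff space X, then d(X) ≤ λ. -/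
open Cardinal Topology Set

universe u

section Aux

variable {X : Type u} [TopologicalSpace X]

/-- Regular open set. -/
def RegOpen (W : Set X) : Prop := W = interior (closure W)

lemma regOpen_isOpen {W : Set X} (h : RegOpen W) : IsOpen W := h ▸ isOpen_interior

lemma regOpen_interior_closure (s : Set X) : RegOpen (interior (closure s)) := by
  apply subset_antisymm
  · exact interior_maximal subset_closure isOpen_interior
  · exact interior_mono (closure_minimal interior_subset isClosed_closure)

/-- Two distinct regular open sets: one contains a point outside the closure of the other. -/
lemma regOpen_crossing {V W : Set X} (hV : RegOpen V) (hW : RegOpen W) (hne : V ≠ W) :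
    (V \ closure W).Nonempty ∨ (W \ closure V).Nonempty := by
  by_contra h
  push_neg at h
  obtain ⟨h1, h2⟩ := h
  rw [diff_eq_empty] at h1 h2
  apply hne
  have hVW : V ⊆ W := by
    calc V = interior V := ((regOpen_isOpen hV).interior_eq).symm
    _ ⊆ interior (closure W) := interior_mono h1
    _ = W := hW.symm
  have hWV : W ⊆ V := by
    calc W = interior W := ((regOpen_isOpen hW).interior_eq).symm
    _ ⊆ interior (closure V) := interior_mono h2
    _ = V := hV.symm
  exact subset_antisymm hVW hWV

end Aux

theorem stmt_8 {X : Type u} [TopologicalSpace X] [T2Space X] (lam : Cardinal.{u})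
    (hlam : ℵ₀ ≤ lam)
    (hpd : PinningDownPair X (((2 : Cardinal.{u}) ^ ((2 : Cardinal.{u}) ^ lam))) lam) :
    ∃ D : Set X, Dense D ∧ #D ≤ lam := by
  set κ : Cardinal.{u} := (2 : Cardinal.{u}) ^ ((2 : Cardinal.{u}) ^ lam) with hκ
  have hlam2 : ℵ₀ ≤ (2 : Cardinal.{u}) ^ lam := hlam.trans (cantor lam).le
  have hκinf : ℵ₀ ≤ κ := hlam2.trans (cantor _).le
  -- Step 1: any family of regular open sets of size ≤ κ has size ≤ 2^λ
  have step1 : ∀ 𝒲 : Set (Set X), (∀ W ∈ 𝒲, RegOpen W) → #𝒲 ≤ κ →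
      #𝒲 ≤ (2 : Cardinal.{u}) ^ lam := by
    intro 𝒲 hreg hcard
    set g : ↥𝒲 × ↥𝒲 → Set X := fun p => (p.1 : Set X) \ closure (p.2 : Set X) with hg
    set 𝒰 : Set (Set X) := {S | S.Nonempty ∧ S ∈ Set.range g} with h𝒰
    have h𝒰open : ∀ U ∈ 𝒰, IsOpen U ∧ U.Nonempty := by
      rintro U ⟨hne, ⟨⟨V, W⟩, rfl⟩⟩
      exact ⟨(regOpen_isOpen (hreg _ V.2)).sdiff isClosed_closure, hne⟩
    have h𝒰card : #𝒰 ≤ κ := by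
      have h1 : #𝒰 ≤ #(Set.range g) := mk_le_mk_of_subset (fun S hS => hS.2)
      have h2 : #(Set.range g) ≤ #(↥𝒲 × ↥𝒲) := mk_range_le
      have h3 : #(↥𝒲 × ↥𝒲) = #𝒲 * #𝒲 := by rw [mk_prod]; simp
      calc #𝒰 ≤ #𝒲 * #𝒲 := h1.trans (h2.trans_eq h3)
      _ ≤ κ * κ := mul_le_mul' hcard hcard
      _ = κ := mul_eq_self hκinf
    obtain ⟨B, hBcard, hBmeets⟩ := hpd 𝒰 h𝒰open h𝒰card
    have hinj : Function.Injective (fun W : ↥𝒲 => {b : ↥B | (b : X) ∈ (W : Set X)}) := by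
      intro V W hVW
      by_contra hne
      have hne' : (V : Set X) ≠ (W : Set X) := fun h => hne (Subtype.ext h)
      rcases regOpen_crossing (hreg _ V.2) (hreg _ W.2) hne' with hc | hc
      · have hmem : (V : Set X) \ closure (W : Set X) ∈ 𝒰 := ⟨hc, ⟨⟨V, W⟩, rfl⟩⟩
        obtain ⟨b, hbB, hbV, hbW⟩ := hBmeets _ hmem
        have := congrFun (congrArg (fun s => fun b => b ∈ s) hVW) ⟨b, hbB⟩
        simp only [Set.mem_setOf_eq, eq_iff_iff] at this
        exact hbW (subset_closure (this.1 hbV))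
      · have hmem : (W : Set X) \ closure (V : Set X) ∈ 𝒰 := ⟨hc, ⟨⟨W, V⟩, rfl⟩⟩
        obtain ⟨b, hbB, hbW, hbV⟩ := hBmeets _ hmem
        have := congrFun (congrArg (fun s => fun b => b ∈ s) hVW) ⟨b, hbB⟩
        simp only [Set.mem_setOf_eq, eq_iff_iff] at this
        exact hbV (subset_closure (this.2 hbW))
    calc #𝒲 ≤ #(Set ↥B) := mk_le_of_injective hinj
    _ = 2 ^ #B := mk_set
    _ ≤ 2 ^ lam := power_le_power_left two_ne_zero hBcard
  -- Step 2: the collection of all regular open sets has size ≤ 2^λ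
  have step2 : #{W : Set X | RegOpen W} ≤ (2 : Cardinal.{u}) ^ lam := by
    by_contra h
    push_neg at h
    have hsucc : Order.succ ((2 : Cardinal.{u}) ^ lam) ≤ #{W : Set X | RegOpen W} :=
      Order.succ_le_of_lt h
    obtain ⟨𝒲, h𝒲sub, h𝒲card⟩ := le_mk_iff_exists_subset.1 hsucc
    have hle : #𝒲 ≤ κ := by
      rw [h𝒲card]
      exact Order.succ_le_of_lt (cantor _)
    have := step1 𝒲 (fun W hW => h𝒲sub hW) hle
    rw [h𝒲card] at this
    exact (Order.lt_succ ((2 : Cardinal.{u}) ^ lam)).not_ge this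
  -- Step 3: |X| ≤ κ
  have step3 : #X ≤ κ := by
    have hinj : Function.Injective
        (fun x : X => {W : {W : Set X | RegOpen W} | x ∈ (W : Set X)}) := by
      intro x y hxy
      by_contra hne
      obtain ⟨U, V, hU, hV, hxU, hyV, hUV⟩ := t2_separation hne
      set W : Set X := interior (closure U) with hW
      have hWreg : RegOpen W := regOpen_interior_closure U
      have hxW : x ∈ W := interior_maximal subset_closure hU hxU
      have hyW : y ∉ W := by
        intro hyW
        have : y ∈ closure U := interior_subset hyW
        have hsub : closure U ⊆ Vᶜ :=
          closure_minimal (fun z hz hzV => Set.disjoint_left.1 hUV hz hzV) hV.isClosed_compl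
        exact hsub this hyV
      have := congrFun (congrArg (fun s => fun W => W ∈ s) hxy) ⟨W, hWreg⟩
      simp only [Set.mem_setOf_eq, eq_iff_iff] at this
      exact hyW (this.1 hxW)
    calc #X ≤ #(Set {W : Set X | RegOpen W}) := mk_le_of_injective hinj
    _ = 2 ^ #{W : Set X | RegOpen W} := mk_set
    _ ≤ 2 ^ ((2 : Cardinal.{u}) ^ lam) := power_le_power_left two_ne_zero step2
  -- Step 4: κ ^ lam = κ
  have hκpow : κ ^ lam = κ := by
    have hmul : (2 : Cardinal.{u}) ^ lam * lam = (2 : Cardinal.{u}) ^ lam := by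
      rw [mul_eq_max hlam2 hlam, max_eq_left (cantor lam).le]
    rw [hκ, ← power_mul, hmul]
  -- Step 5: the family of complements of closures of non-dense small sets
  set 𝒰 : Set (Set X) :=
    {S | ∃ A : Set X, #A ≤ lam ∧ ¬ Dense A ∧ S = (closure A)ᶜ} with h𝒰
  have h𝒰open : ∀ U ∈ 𝒰, IsOpen U ∧ U.Nonempty := by
    rintro U ⟨A, hA, hAd, rfl⟩
    refine ⟨isClosed_closure.isOpen_compl, Set.nonempty_compl.2 ?_⟩
    intro h
    exact hAd (dense_iff_closure_eq.2 h)
  have h𝒰card : #𝒰 ≤ κ := by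
    have hmap : 𝒰 ⊆ Set.range (fun A : {A : Set X // #A ≤ lam} => (closure (A : Set X))ᶜ) := by
      rintro U ⟨A, hA, _, rfl⟩
      exact ⟨⟨A, hA⟩, rfl⟩
    calc #𝒰 ≤ #{A : Set X // #A ≤ lam} := (mk_le_mk_of_subset hmap).trans mk_range_le
    _ ≤ max #X ℵ₀ ^ lam := mk_bounded_set_le X lam
    _ ≤ κ ^ lam := power_le_power_right (max_le step3 hκinf)
    _ = κ := hκpow
  obtain ⟨B, hBcard, hBmeets⟩ := hpd 𝒰 h𝒰open h𝒰card
  refine ⟨B, ?_, hBcard⟩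
  by_contra hBd
  obtain ⟨b, hbB, hbC⟩ := hBmeets ((closure B)ᶜ) ⟨B, hBcard, hBd, rfl⟩
  exact hbC (subset_closure hbB)
end

section
/- In a Hausdorff space X, every point is the intersection of the closures of its regular open neighborhoods; consequently |X| ≤ 2^{|RO(X)|}. -/
open Cardinal Topology Set

universe u

lemma regopen_interior_closure {X : Type u} [TopologicalSpace X] (V : Set X) :
    interior (closure V) = interior (closure (interior (closure V))) := by
  apply subset_antisymm
  · exact isOpen_interior.subset_interior_closure
  · exact interior_mono (closure_minimal interior_subset isClosed_closure)

theorem stmt_9 {X : Type u} [TopologicalSpace X] [T2Space X] :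
    (∀ x : X, (⋂ U ∈ {U : Set X | U = interior (closure U) ∧ x ∈ U}, closure U) = {x}) ∧
    #X ≤ 2 ^ #{U : Set X | U = interior (closure U)} := by
  have key : ∀ x y : X, x ≠ y → ∃ U : Set X, U = interior (closure U) ∧ x ∈ U ∧ y ∉ closure U := by
    intro x y hxy
    obtain ⟨V, W, hV, hW, hxV, hyW, hd⟩ := t2_separation hxy
    refine ⟨interior (closure V), regopen_interior_closure V, hV.subset_interior_closure hxV, ?_⟩
    have h1 : closure (interior (closure V)) ⊆ closure V :=
      closure_minimal interior_subset isClosed_closure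
    have h2 : closure V ⊆ Wᶜ :=
      closure_minimal (fun z hz hzW => hd.le_bot ⟨hz, hzW⟩) hW.isClosed_compl
    exact fun h => h2 (h1 h) hyW
  have main : ∀ x : X, (⋂ U ∈ {U : Set X | U = interior (closure U) ∧ x ∈ U}, closure U) = {x} := by
    intro x
    apply subset_antisymm
    · intro y hy
      by_contra hne
      obtain ⟨U, hU, hxU, hyU⟩ := key x y (Ne.symm hne)
      exact hyU (by simpa using mem_iInter₂.1 hy U ⟨hU, hxU⟩)
    · rintro y rfl
      exact mem_iInter₂.2 fun U hU => subset_closure hU.2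
  refine ⟨main, ?_⟩
  have : #X ≤ #(Set {U : Set X | U = interior (closure U)}) := by
    apply Cardinal.mk_le_of_injective (f := fun x => {U | x ∈ U.1})
    intro x y h
    by_contra hne
    obtain ⟨U, hU, hxU, hyU⟩ := key x y hne
    replace h := Set.ext_iff.mp h ⟨U, hU⟩
    exact hyU (subset_closure (h.mp hxU))
  simpa [Cardinal.mk_set] using this
end

section
/- If 2^{2^λ} > (2^λ)⁺, then there exists a Urysohn space X such that ((2^λ)⁺, λ) is a dominating pair for X but d(X) > λ. -/
open Cardinal Topology Set TopologicalSpace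

universe u

attribute [local instance] Classical.propDecidable

noncomputable section AuxDense

variable {L : Type u}

/-- Basic "finitely determined" functions on the Cantor cube `Set L → ZMod 2`. -/
def dfun (s : Finset L) (σ : Finset (Finset L)) : Set L → ZMod 2 :=
  fun S => if s.filter (fun l => l ∈ S) ∈ σ then 1 else 0

/-- The canonical small dense set of the cube. -/
def DSet (L : Type u) : Set (Set L → ZMod 2) :=
  Set.range (fun p : Finset L × Finset (Finset L) => dfun p.1 p.2)

lemma zmod2_cases : ∀ v : ZMod 2, v = 0 ∨ v = 1 := by decide

lemma DSet_dense (x : Set L → ZMod 2) (I : Finset (Set L)) :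
    ∃ c ∈ DSet L, ∀ S ∈ I, c S = x S := by
  have hsep : ∀ S T : Set L, S ≠ T → ∃ l : L, (l ∈ S ∧ l ∉ T) ∨ (l ∉ S ∧ l ∈ T) := by
    intro S T hST
    by_contra hc
    push_neg at hc
    apply hST
    ext l
    have := hc l
    tauto
  set wit : Set L × Set L → Finset L := fun p =>
    if h : p.1 ≠ p.2 then {(hsep p.1 p.2 h).choose} else ∅ with hwit
  set s : Finset L := (I ×ˢ I).biUnion wit with hs
  have hinj : ∀ S ∈ I, ∀ T ∈ I, S ≠ T →
      s.filter (fun l => l ∈ S) ≠ s.filter (fun l => l ∈ T) := by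
    intro S hS T hT hST
    have hlmem : (hsep S T hST).choose ∈ s := by
      rw [hs]
      apply Finset.mem_biUnion.mpr
      refine ⟨(S, T), Finset.mem_product.mpr ⟨hS, hT⟩, ?_⟩
      rw [hwit]
      simp only [ne_eq]
      rw [dif_pos hST]
      exact Finset.mem_singleton_self _
    set l := (hsep S T hST).choose with hl
    have hspec := (hsep S T hST).choose_spec
    intro heq
    have h1 : (l ∈ s.filter (fun l => l ∈ S)) = (l ∈ s.filter (fun l => l ∈ T)) := by rw [heq]
    simp only [Finset.mem_filter, hlmem, true_and, eq_iff_iff] at h1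
    tauto
  set σ : Finset (Finset L) :=
    (I.filter (fun S => x S = 1)).image (fun S => s.filter (fun l => l ∈ S)) with hσ
  refine ⟨dfun s σ, ⟨(s, σ), rfl⟩, ?_⟩
  intro S hS
  have hmem : (s.filter (fun l => l ∈ S) ∈ σ) ↔ x S = 1 := by
    constructor
    · intro hm
      rw [hσ] at hm
      obtain ⟨T, hT, hTeq⟩ := Finset.mem_image.mp hm
      obtain ⟨hTI, hxT⟩ := Finset.mem_filter.mp hT
      by_cases hTS : T = S
      · rwa [hTS] at hxT
      · exact absurd hTeq (hinj T hTI S hS hTS)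
    · intro hx1
      rw [hσ]
      exact Finset.mem_image.mpr ⟨S, Finset.mem_filter.mpr ⟨hS, hx1⟩, rfl⟩
  have hv : dfun s σ S = if x S = 1 then 1 else 0 := by
    unfold dfun
    by_cases hx1 : x S = 1
    · rw [if_pos (hmem.mpr hx1), if_pos hx1]
    · rw [if_neg (fun hm => hx1 (hmem.mp hm)), if_neg hx1]
  rcases zmod2_cases (x S) with h0 | h1
  · rw [hv, h0, if_neg (by decide : ¬((0:ZMod 2) = 1))]
  · rw [hv, h1, if_pos rfl]

lemma mk_DSet_le [Infinite L] : #(DSet L) ≤ #L := by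
  have h1 : #(DSet L) ≤ #(Finset L × Finset (Finset L)) := Cardinal.mk_range_le
  have h2 : #(Finset L × Finset (Finset L)) = #L := by
    simp only [Cardinal.mk_prod, Cardinal.mk_finset_of_infinite, Cardinal.lift_id]
    exact Cardinal.mul_eq_self (Cardinal.infinite_iff.mp ‹Infinite L›)
  rwa [h2] at h1

/-- The set of finite sums of elements of `DSet L`. -/
def HSet (L : Type u) : Set (Set L → ZMod 2) :=
  Set.range (fun l : List (DSet L) => (l.map Subtype.val).sum)

lemma zero_mem_HSet : (0 : Set L → ZMod 2) ∈ HSet L := ⟨[], rfl⟩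

lemma DSet_subset_HSet : DSet L ⊆ HSet L := by
  intro d hd
  exact ⟨[⟨d, hd⟩], by simp⟩

lemma HSet_add {x y : Set L → ZMod 2} (hx : x ∈ HSet L) (hy : y ∈ HSet L) :
    x + y ∈ HSet L := by
  obtain ⟨lx, rfl⟩ := hx
  obtain ⟨ly, rfl⟩ := hy
  exact ⟨lx ++ ly, by simp⟩

lemma mk_HSet_le [Infinite L] : #(HSet L) ≤ #L := by
  have h1 : #(HSet L) ≤ #(List (DSet L)) := Cardinal.mk_range_le
  have h2 : #(List (DSet L)) ≤ max ℵ₀ #(DSet L) := Cardinal.mk_list_le_max _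
  have h3 : max ℵ₀ #(DSet L) ≤ #L :=
    max_le (Cardinal.infinite_iff.mp ‹Infinite L›) mk_DSet_le
  exact h1.trans (h2.trans h3)

lemma addself (x : Set L → ZMod 2) : x + x = 0 := by
  funext S
  have : ∀ v : ZMod 2, v + v = 0 := by decide
  exact this (x S)

lemma add_switch (a b c d : Set L → ZMod 2) (hh : a + b = c + d) : a + c = b + d := by
  have e1 : a + c = (a + b) + (c + b) := by
    rw [add_add_add_comm, addself b, add_zero]
  rw [e1, hh, add_add_add_comm, addself c, zero_add, add_comm]

end AuxDense

def DominatingPair (X : Type u) [TopologicalSpace X] (k lam : Cardinal.{u}) : Prop :=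
  ∀ A : Set X, #A ≤ k → ∃ B : Set X, #B ≤ lam ∧ A ⊆ closure B

theorem stmt_10 (lam : Cardinal.{u}) (hlam : ℵ₀ ≤ lam)
    (h : Order.succ ((2 : Cardinal.{u}) ^ lam) < ((2 : Cardinal.{u}) ^ ((2 : Cardinal.{u}) ^ lam))) :
    ∃ (X : Type u) (_ : TopologicalSpace X), T25Space X ∧
      DominatingPair X (Order.succ ((2 : Cardinal.{u}) ^ lam)) lam ∧
      ∀ D : Set X, Dense D → lam < #D := by
  classical
  set κ : Cardinal.{u} := (2 : Cardinal.{u}) ^ lam with hκ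
  set θ : Cardinal.{u} := Order.succ (Order.succ κ) with hθ
  let L : Type u := lam.out
  have hmkL : #L = lam := Cardinal.mk_out lam
  haveI : Infinite L := Cardinal.infinite_iff.mpr (by rw [hmkL]; exact hlam)
  let C : Type u := Set L → ZMod 2
  letI : TopologicalSpace (ZMod 2) := ⊥
  haveI : DiscreteTopology (ZMod 2) := ⟨rfl⟩
  letI tC : TopologicalSpace C := inferInstanceAs (TopologicalSpace (Set L → ZMod 2))
  have hmkC : #C = (2 : Cardinal.{u}) ^ κ := by
    have h2 : #(ZMod 2) = 2 := by rw [Cardinal.mk_fintype, ZMod.card]; norm_num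
    have hC : #C = Cardinal.lift.{u} #(ZMod 2) ^ Cardinal.lift.{0} #(Set L) :=
      Cardinal.mk_arrow (Set L) (ZMod 2)
    rw [hC, h2, Cardinal.mk_set, hmkL, Cardinal.lift_uzero, hκ]
    norm_num
  -- the equivalence relation given by cosets of HSet L
  have heqv : Equivalence (fun x y : C => x + y ∈ HSet L) := by
    constructor
    · intro x; rw [addself]; exact zero_mem_HSet
    · intro x y hxy; rwa [add_comm]
    · intro x y z hxy hyz
      have hs := HSet_add hxy hyz
      rwa [add_comm y z, add_add_add_comm, addself y, add_zero] at hs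
  let sd : Setoid C := ⟨fun x y => x + y ∈ HSet L, heqv⟩
  let Q : Type u := Quotient sd
  have hpf : ∀ x : C, x + (Quotient.mk sd x).out ∈ HSet L := by
    intro x
    have h1 : Quotient.mk sd ((Quotient.mk sd x).out) = Quotient.mk sd x := Quotient.out_eq _
    have h2 : ((Quotient.mk sd x).out) + x ∈ HSet L := Quotient.exact h1
    rwa [add_comm] at h2
  have hCQ : #C ≤ #Q * #(HSet L) := by
    have hinj : Function.Injective
        (fun x : C => ((Quotient.mk sd x, ⟨x + (Quotient.mk sd x).out, hpf x⟩) : Q × HSet L)) := by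
      intro x y hxy
      have h1 : Quotient.mk sd x = Quotient.mk sd y := congrArg Prod.fst hxy
      have h2 : x + (Quotient.mk sd x).out = y + (Quotient.mk sd y).out :=
        congrArg (fun p : Q × HSet L => (p.2 : C)) hxy
      rw [h1] at h2
      exact add_right_cancel h2
    calc #C ≤ #(Q × HSet L) := Cardinal.mk_le_of_injective hinj
    _ = #Q * #(HSet L) := by rw [Cardinal.mk_prod, Cardinal.lift_id, Cardinal.lift_id]
  have hκθ : κ < θ := lt_of_lt_of_le (Order.lt_succ κ) (Order.le_succ _)
  have hlamθ : lam < θ := lt_of_lt_of_le (Cardinal.cantor lam) hκθ.le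
  have haleph : ℵ₀ ≤ θ := (le_trans (hlam.trans (Cardinal.cantor lam).le) hκθ.le)
  have hθ2κ : θ ≤ 2 ^ κ := by
    rw [hθ]
    exact Order.succ_le_of_lt h
  have hQθ : θ ≤ #Q := by
    by_contra hc
    push_neg at hc
    have hH : #(HSet L) < θ := lt_of_le_of_lt (le_trans mk_HSet_le (le_of_eq hmkL)) hlamθ
    have hCθ : #C < θ := lt_of_le_of_lt hCQ (Cardinal.mul_lt_of_lt haleph hc hH)
    rw [hmkC] at hCθ
    exact absurd hθ2κ (not_le_of_gt hCθ)
  let T : Type u := θ.ord.ToType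
  have hmkT : #T = θ := Cardinal.mk_ord_toType θ
  have hTQ : #T ≤ #Q := by rw [hmkT]; exact hQθ
  obtain ⟨e⟩ : Nonempty (T ↪ Q) := (Cardinal.le_def T Q).mp hTQ
  let g : T → C := fun i => (e i).out
  have hgmk : ∀ i : T, Quotient.mk sd (g i) = e i := fun i => Quotient.out_eq _
  let X : Type u := T × (DSet L)
  let f : X → C := fun p => g p.1 + (p.2 : C)
  have hginj : ∀ i j : T, ∀ a b : C, a ∈ DSet L → b ∈ DSet L → g i + a = g j + b → i = j := by
    intro i j a b ha hb hab
    have h1 : g i + g j = a + b := add_switch _ _ _ _ hab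
    have h2 : g i + g j ∈ HSet L :=
      h1 ▸ HSet_add (DSet_subset_HSet ha) (DSet_subset_HSet hb)
    have h3 : Quotient.mk sd (g i) = Quotient.mk sd (g j) := Quotient.sound h2
    rw [hgmk, hgmk] at h3
    exact e.injective h3
  have hfinj : Function.Injective f := by
    intro p q hpq
    have hij : p.1 = q.1 := hginj _ _ _ _ p.2.2 q.2.2 hpq
    have hsnd : (p.2 : C) = q.2 := by
      have h2 := hpq
      simp only [f] at h2
      rw [hij] at h2
      exact add_left_cancel h2
    exact Prod.ext hij (Subtype.ext hsnd)
  -- the refined topology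
  let SS : Set (Set X) :=
    {V | ∃ U : Set C, IsOpen U ∧ V = f ⁻¹' U} ∪ {V | ∃ i : T, V = {p : X | i ≤ p.1}}
  let tX : TopologicalSpace X := TopologicalSpace.generateFrom SS
  letI := tX
  -- boundedness of small sets in T
  haveI hwoT : IsWellOrder T (· < ·) := isWellOrder_lt
  have hbound : ∀ s : Set T, #s < θ → ∃ i0 : T, ∀ x ∈ s, x < i0 := by
    intro s hs
    have hreg : (Order.succ (Order.succ κ)).IsRegular :=
      Cardinal.isRegular_succ (le_trans (hlam.trans (Cardinal.cantor lam).le) (Order.le_succ κ))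
    have hcof : (Ordinal.type ((· < ·) : T → T → Prop)).cof = θ := by
      rw [Ordinal.type_toType]
      rw [hθ]
      exact hreg.cof_eq
    exact not_isCofinal_iff.1 (fun hc => absurd (Order.cof_le hc)
      (not_le_of_gt (lt_of_lt_of_eq hs (hcof.symm.trans (Ordinal.cof_type T)))))
  obtain ⟨c0, hc0, -⟩ := DSet_dense (L := L) 0 ∅
  -- the basis of the refined topology
  have hbasis : TopologicalSpace.IsTopologicalBasis
      ((fun F : Set (Set X) => ⋂₀ F) '' {F : Set (Set X) | F.Finite ∧ F ⊆ SS}) :=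
    TopologicalSpace.isTopologicalBasis_of_subbasis rfl
  refine ⟨X, tX, ?_, ?_, ?_⟩
  · -- T2.5
    haveI : T25Space C := inferInstanceAs (T25Space (Set L → ZMod 2))
    have hcont : Continuous f := by
      rw [continuous_def]
      intro U hU
      exact TopologicalSpace.isOpen_generateFrom_of_mem (Or.inl ⟨U, hU, rfl⟩)
    exact T25Space.of_injective_continuous hfinj hcont
  · -- dominating pair
    intro A hA
    obtain ⟨i0, hi0⟩ := hbound (Prod.fst '' A)
      (lt_of_le_of_lt (le_trans Cardinal.mk_image_le hA) (Order.lt_succ _))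
    refine ⟨{p : X | p.1 = i0}, ?_, ?_⟩
    · have hinj2 : Function.Injective
          (fun p : {p : X | p.1 = i0} => ((p : X).2 : DSet L)) := by
        intro p q hpq
        apply Subtype.ext
        apply Prod.ext
        · rw [p.2, q.2]
        · exact hpq
      calc #{p : X | p.1 = i0} ≤ #(DSet L) := Cardinal.mk_le_of_injective hinj2
      _ ≤ #L := mk_DSet_le
      _ = lam := hmkL
    · intro x hx
      rw [hbasis.mem_closure_iff]
      intro o ho hxo
      obtain ⟨F, ⟨hFfin, hFS⟩, rfl⟩ := ho
      have hchoice : ∀ W : Set X, ∃ U : Set C, IsOpen U ∧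
          ((∃ U0 : Set C, IsOpen U0 ∧ W = f ⁻¹' U0) → W = f ⁻¹' U) ∧
          (¬(∃ U0 : Set C, IsOpen U0 ∧ W = f ⁻¹' U0) → U = Set.univ) := by
        intro W
        by_cases hw : ∃ U0 : Set C, IsOpen U0 ∧ W = f ⁻¹' U0
        · obtain ⟨U0, hU0, hWU0⟩ := hw
          exact ⟨U0, hU0, fun _ => hWU0, fun hw' => absurd ⟨U0, hU0, hWU0⟩ hw'⟩
        · exact ⟨Set.univ, isOpen_univ, fun hw' => absurd hw' hw, fun _ => rfl⟩
      choose UW hUWopen hUWspec hUWuniv using hchoice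
      have hVopen : IsOpen (⋂ W ∈ F, UW W) :=
        hFfin.isOpen_biInter (fun W _ => hUWopen W)
      have hfxV : f x ∈ ⋂ W ∈ F, UW W := by
        apply Set.mem_iInter₂.mpr
        intro W hW
        by_cases hw : ∃ U0 : Set C, IsOpen U0 ∧ W = f ⁻¹' U0
        · have hxW : x ∈ W := Set.mem_sInter.mp hxo W hW
          rw [hUWspec W hw] at hxW
          exact hxW
        · rw [hUWuniv W hw]; exact Set.mem_univ _
      obtain ⟨I, u, hu, hsub⟩ := (isOpen_pi_iff.mp hVopen) (f x) hfxV
      obtain ⟨c, hcD, hcagree⟩ := DSet_dense (f x + g i0) I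
      have hgc : g i0 + c ∈ ⋂ W ∈ F, UW W := by
        apply hsub
        rw [Set.mem_pi]
        intro S hS
        have h1 : c S = f x S + g i0 S := hcagree S (Finset.mem_coe.mp hS)
        have h2 : (g i0 + c) S = f x S := by
          have harith : ∀ a b : ZMod 2, a + (b + a) = b := by decide
          show g i0 S + c S = f x S
          rw [h1]
          exact harith _ _
        rw [h2]
        exact (hu S (Finset.mem_coe.mp hS)).2
      refine ⟨(i0, ⟨c, hcD⟩), Set.mem_sInter.mpr ?_, rfl⟩
      intro W hW
      by_cases hw : ∃ U0 : Set C, IsOpen U0 ∧ W = f ⁻¹' U0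
      · rw [hUWspec W hw]
        exact Set.mem_iInter₂.mp hgc W hW
      · rcases hFS hW with hL | hR
        · exact absurd hL hw
        · obtain ⟨i, rfl⟩ := hR
          have hxW : x ∈ {p : X | i ≤ p.1} := Set.mem_sInter.mp hxo _ hW
          have hx1 : x.1 < i0 := hi0 x.1 ⟨x, hx, rfl⟩
          exact le_trans hxW hx1.le
  · -- density
    intro E hE
    by_contra hc
    push_neg at hc
    obtain ⟨i0, hi0⟩ := hbound (Prod.fst '' E)
      (lt_of_le_of_lt (le_trans Cardinal.mk_image_le hc) hlamθ)
    have hseg : IsOpen {p : X | i0 ≤ p.1} :=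
      TopologicalSpace.isOpen_generateFrom_of_mem (Or.inr ⟨i0, rfl⟩)
    obtain ⟨p, hp1, hp2⟩ := hE.inter_open_nonempty _ hseg ⟨(i0, ⟨c0, hc0⟩), le_refl i0⟩
    exact absurd hp1 (not_le_of_gt (hi0 p.1 ⟨p, hp2, rfl⟩))
end

section
/- Let κ be an uncountable regular cardinal and ℐ a κ-complete, κ-tall proper ideal on κ containing all subsets of size < κ. Then κ is a caliber of the subspace Σ_ℐ(κ) = {x ∈ {0,1}^κ : supp(x) ∈ ℐ} of the Cantor cube {0,1}^κ. -/
open Cardinal Topology Set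

universe u

lemma stmt12_small_biUnion {k : Cardinal.{u}} (hk : k.IsRegular)
    {ι α : Type u} (J : Set ι) (A : ι → Set α) (hJ : #J < k) (hA : ∀ i ∈ J, #(A i) < k) :
    #(⋃ i ∈ J, A i) < k := by
  refine lt_of_le_of_lt (Cardinal.mk_biUnion_le A J) ?_
  exact Cardinal.mul_lt_of_lt hk.aleph0_le hJ
    (Cardinal.iSup_lt_of_isRegular hk hJ (fun i => hA i.1 i.2))

lemma union_split {k : Cardinal.{u}} (hk : k.IsRegular) {ι : Type u}
    {A B : Set ι} (h : #(A ∪ B : Set ι) = k) : #A = k ∨ #B = k := by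
  by_contra h'
  push_neg at h'
  have hA : #A < k := lt_of_le_of_ne (h ▸ Cardinal.mk_le_mk_of_subset subset_union_left) h'.1
  have hB : #B < k := lt_of_le_of_ne (h ▸ Cardinal.mk_le_mk_of_subset subset_union_right) h'.2
  exact absurd h (((Cardinal.mk_union_le _ _).trans_lt
    (Cardinal.add_lt_of_lt hk.aleph0_le hA hB)).ne)

lemma pigeon {k : Cardinal.{u}} (hk : k.IsRegular) (huncount : ℵ₀ < k)
    {ι : Type u} (J : Set ι) (hJ : #J = k) (f : ι → ℕ) :
    ∃ n : ℕ, #({α ∈ J | f α ≤ n} : Set ι) = k := by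
  by_contra h
  push_neg at h
  have h1 : ∀ n : ULift.{u} ℕ, #({α ∈ J | f α ≤ n.down} : Set ι) < k := fun n =>
    lt_of_le_of_ne (hJ ▸ Cardinal.mk_le_mk_of_subset (sep_subset _ _)) (h n.down)
  have hsub : J ⊆ ⋃ n : ULift.{u} ℕ, {α ∈ J | f α ≤ n.down} := fun α hα =>
    mem_iUnion.2 ⟨⟨f α⟩, hα, le_refl _⟩
  have hle : #J ≤ #(⋃ n : ULift.{u} ℕ, {α ∈ J | f α ≤ n.down}) :=
    Cardinal.mk_le_mk_of_subset hsub
  have hnat : #(ULift.{u} ℕ) < k := by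
    rw [Cardinal.mk_eq_aleph0]; exact huncount
  have hlt : #(⋃ n : ULift.{u} ℕ, {α ∈ J | f α ≤ n.down}) < k :=
    (Cardinal.mk_iUnion_le _).trans_lt
      (Cardinal.mul_lt_of_lt hk.aleph0_le hnat
        (Cardinal.iSup_lt_of_isRegular hk hnat h1))
  exact absurd hJ (hle.trans_lt hlt).ne

lemma disjointify {k : Cardinal.{u}} (hk : k.IsRegular) (huncount : ℵ₀ < k)
    {ι β : Type u} (J : Set ι) (hJ : #J = k) (s : ι → Finset β)
    (hβ : ∀ b : β, #({α ∈ J | b ∈ s α} : Set ι) < k) :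
    ∃ M ⊆ J, #M = k ∧ M.Pairwise (fun a b => Disjoint (s a) (s b)) := by
  obtain ⟨M, hM⟩ := zorn_subset {M | M ⊆ J ∧ M.Pairwise (fun a b => Disjoint (s a) (s b))}
    (by
      intro c hc hchain
      refine ⟨⋃₀ c, ⟨sUnion_subset fun t ht => (hc ht).1, ?_⟩, fun t ht => subset_sUnion_of_mem ht⟩
      intro a ha b hb hab
      obtain ⟨ta, hta, hata⟩ := ha
      obtain ⟨tb, htb, hbtb⟩ := hb
      rcases hchain.total hta htb with hle | hle
      · exact (hc htb).2 (hle hata) hbtb hab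
      · exact (hc hta).2 hata (hle hbtb) hab)
  obtain ⟨hMJ, hMp⟩ := hM.1
  refine ⟨M, hMJ, ?_, hMp⟩
  by_contra hMk
  have hMlt : #M < k := lt_of_le_of_ne (hJ ▸ Cardinal.mk_le_mk_of_subset hMJ) hMk
  have hWlt : #(⋃ a ∈ M, (s a : Set β)) < k :=
    stmt12_small_biUnion hk M _ hMlt (fun i _ => (Set.toFinite _).lt_aleph0.trans huncount)
  have hbad : #(⋃ b ∈ (⋃ a ∈ M, (s a : Set β)), ({α ∈ J | b ∈ s α} : Set ι)) < k :=
    stmt12_small_biUnion hk _ _ hWlt (fun b _ => hβ b)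
  have hcover : ¬ (J ⊆ M ∪ ⋃ b ∈ (⋃ a ∈ M, (s a : Set β)), ({α ∈ J | b ∈ s α} : Set ι)) := by
    intro hsub
    have h1 : #J ≤ #((M ∪ ⋃ b ∈ (⋃ a ∈ M, (s a : Set β)), ({α ∈ J | b ∈ s α} : Set ι)) : Set ι) :=
      Cardinal.mk_le_mk_of_subset hsub
    have h2 : #((M ∪ ⋃ b ∈ (⋃ a ∈ M, (s a : Set β)), ({α ∈ J | b ∈ s α} : Set ι)) : Set ι) < k :=
      (Cardinal.mk_union_le _ _).trans_lt (Cardinal.add_lt_of_lt hk.aleph0_le hMlt hbad)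
    exact absurd hJ (h1.trans_lt h2).ne
  obtain ⟨α₀, hα₀J, hα₀⟩ := not_subset.1 hcover
  have hα₀M : α₀ ∉ M := fun h => hα₀ (Or.inl h)
  have hα₀bad : α₀ ∉ ⋃ b ∈ (⋃ a ∈ M, (s a : Set β)), ({α ∈ J | b ∈ s α} : Set ι) :=
    fun h => hα₀ (Or.inr h)
  have hdisj : ∀ a ∈ M, Disjoint (s α₀) (s a) := by
    intro a ha
    rw [Finset.disjoint_left]
    intro b hb hba
    exact hα₀bad (mem_biUnion (mem_biUnion ha (Finset.mem_coe.2 hba)) ⟨hα₀J, hb⟩)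
  have hins : insert α₀ M ∈ {M | M ⊆ J ∧ M.Pairwise (fun a b => Disjoint (s a) (s b))} := by
    refine ⟨insert_subset hα₀J hMJ, ?_⟩
    haveI : Std.Symm (fun a b => Disjoint (s a) (s b)) := ⟨fun a b h => h.symm⟩
    rw [Set.pairwise_insert_of_symm]
    exact ⟨hMp, fun b hb _ => hdisj b hb⟩
  have := hM.2 hins (subset_insert _ _)
  exact hα₀M (this (mem_insert _ _))

lemma core {k : Cardinal.{u}} (hk : k.IsRegular) (huncount : ℵ₀ < k)
    {I : Set (Set k.out)}
    (hdown : ∀ A ∈ I, ∀ B ⊆ A, B ∈ I)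
    (hpair : ∀ A ∈ I, ∀ B ∈ I, A ∪ B ∈ I)
    (hsmall : ∀ A : Set k.out, #A < k → A ∈ I)
    (htall : ∀ S : Set k.out, #S = k → ∃ J ∈ I, J ⊆ S ∧ #J = k) :
    ∀ (n : ℕ) (J : Set k.out) (s : k.out → Finset k.out) (x : k.out → k.out → Bool),
      #J = k → (∀ α ∈ J, (s α).card ≤ n) →
      ∃ J' ⊆ J, #J' = k ∧ ∃ y : k.out → Bool, {β | y β = true} ∈ I ∧
        ∀ α ∈ J', ∀ β ∈ s α, y β = x α β := by
  classical
  intro n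
  induction n with
  | zero =>
    intro J s x hJ hcard
    refine ⟨J, Subset.rfl, hJ, fun _ => false, ?_, ?_⟩
    · have he : {β : k.out | (false : Bool) = true} = ∅ := by ext β; simp
      rw [he]
      exact hsmall ∅ (by rw [Cardinal.mk_emptyCollection]; exact aleph0_pos.trans huncount)
    · intro α hα β hβ
      rw [Finset.card_eq_zero.1 (Nat.le_zero.1 (hcard α hα))] at hβ
      exact absurd hβ (Finset.notMem_empty _)
  | succ n ih =>
    intro J s x hJ hcard
    by_cases hAcase : ∃ β₀, ¬ #({α ∈ J | β₀ ∈ s α} : Set k.out) < k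
    · -- Case A : some coordinate appears in κ-many supports
      obtain ⟨β₀, hβ₀⟩ := hAcase
      have hQ : #({α ∈ J | β₀ ∈ s α} : Set k.out) = k :=
        le_antisymm ((Cardinal.mk_le_mk_of_subset (sep_subset _ _)).trans hJ.le) (not_lt.1 hβ₀)
      have hsplit : ({α ∈ J | β₀ ∈ s α} : Set k.out) =
          ({α ∈ J | β₀ ∈ s α ∧ x α β₀ = true} : Set k.out) ∪
          ({α ∈ J | β₀ ∈ s α ∧ x α β₀ = false} : Set k.out) := by
        ext α
        simp only [mem_sep_iff, mem_union]
        constructor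
        · rintro ⟨h1, h2⟩
          rcases Bool.eq_false_or_eq_true (x α β₀) with h | h
          · exact Or.inl ⟨h1, h2, h⟩
          · exact Or.inr ⟨h1, h2, h⟩
        · rintro (⟨h1, h2, _⟩ | ⟨h1, h2, _⟩) <;> exact ⟨h1, h2⟩
      rw [hsplit] at hQ
      obtain ⟨b, hb⟩ : ∃ b : Bool, #({α ∈ J | β₀ ∈ s α ∧ x α β₀ = b} : Set k.out) = k := by
        rcases union_split hk hQ with h | h
        · exact ⟨true, h⟩
        · exact ⟨false, h⟩
      obtain ⟨J', hJ'sub, hJ'k, y, hyI, hagr⟩ :=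
        ih ({α ∈ J | β₀ ∈ s α ∧ x α β₀ = b} : Set k.out) (fun α => (s α).erase β₀) x hb
          (by
            intro α hα
            have h1 := hcard α hα.1
            rw [Finset.card_erase_of_mem hα.2.1]
            omega)
      refine ⟨J', hJ'sub.trans (sep_subset _ _), hJ'k, Function.update y β₀ b, ?_, ?_⟩
      · refine hdown _ (hpair _ hyI _ (hsmall {β₀} ?_)) _ ?_
        · rw [Cardinal.mk_singleton]
          exact Cardinal.one_lt_aleph0.trans huncount
        · intro β hβ
          by_cases h : β = β₀
          · exact Or.inr (by simp [h])
          · rw [mem_setOf_eq, Function.update_of_ne h] at hβ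
            exact Or.inl hβ
      · intro α hα β hβ
        by_cases h : β = β₀
        · subst h
          rw [Function.update_self]
          exact ((hJ'sub hα).2.2).symm
        · rw [Function.update_of_ne h]
          exact hagr α hα β (Finset.mem_erase.2 ⟨h, hβ⟩)
    · -- Case B : every coordinate appears in < κ supports
      push_neg at hAcase
      obtain ⟨M, hMJ, hMk, hMdis⟩ := disjointify hk huncount J hJ s hAcase
      have hMsplit : M = ({α ∈ M | ∀ β ∈ s α, x α β = false} : Set k.out) ∪
          ({α ∈ M | ¬ ∀ β ∈ s α, x α β = false} : Set k.out) := by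
        ext α
        simp only [mem_sep_iff, mem_union]
        tauto
      rw [hMsplit] at hMk
      rcases union_split hk hMk with hM₀ | hM₁
      · -- all-false case: the zero point works
        refine ⟨_, (sep_subset _ _).trans hMJ, hM₀, fun _ => false, ?_, ?_⟩
        · have he : {β : k.out | (false : Bool) = true} = ∅ := by ext β; simp
          rw [he]
          exact hsmall ∅ (by rw [Cardinal.mk_emptyCollection]; exact aleph0_pos.trans huncount)
        · intro α hα β hβ
          exact (hα.2 β hβ).symm
      · -- κ-many constraints with a positive coordinate: use tallness
        set M₁ : Set k.out := {α ∈ M | ¬ ∀ β ∈ s α, x α β = false} with hM₁def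
        have hne : Nonempty k.out := by
          rw [← Cardinal.mk_ne_zero_iff, Cardinal.mk_out]
          exact (aleph0_pos.trans huncount).ne'
        let b : k.out → k.out := fun α =>
          if h : ∃ β, β ∈ s α ∧ x α β = true then h.choose else hne.some
        have hbspec : ∀ α ∈ M₁, b α ∈ s α ∧ x α (b α) = true := by
          intro α hα
          have hex : ∃ β, β ∈ s α ∧ x α β = true := by
            have h2 := hα.2
            push_neg at h2
            obtain ⟨β, hβ, hxb⟩ := h2
            exact ⟨β, hβ, by simpa using hxb⟩
          simp only [b, dif_pos hex]
          exact hex.choose_spec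
        have hbinj : InjOn b M₁ := by
          intro a ha a' ha' hEq
          by_contra hne'
          have hd := hMdis ha.1 ha'.1 hne'
          exact (Finset.disjoint_left.1 hd (hbspec a ha).1) (hEq ▸ (hbspec a' ha').1)
        have hS : #(b '' M₁) = k := (Cardinal.mk_image_eq_of_injOn b M₁ hbinj).trans hM₁
        obtain ⟨J₀, hJ₀I, hJ₀S, hJ₀k⟩ := htall _ hS
        set K : Set k.out := {α ∈ M₁ | b α ∈ J₀} with hKdef
        have hbK : b '' K = J₀ := by
          apply subset_antisymm
          · rintro γ ⟨α, hα, rfl⟩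
            exact hα.2
          · intro γ hγ
            obtain ⟨α, hα, rfl⟩ := hJ₀S hγ
            exact ⟨α, ⟨hα, hγ⟩, rfl⟩
        have hK : #K = k := by
          rw [← Cardinal.mk_image_eq_of_injOn b K (hbinj.mono (sep_subset _ _)), hbK]
          exact hJ₀k
        obtain ⟨K', hK'K, hK'k, y', hy'I, hagr⟩ :=
          ih K (fun α => (s α).erase (b α)) x hK
            (by
              intro α hα
              have h1 := hcard α (hMJ hα.1.1)
              rw [Finset.card_erase_of_mem (hbspec α hα.1).1]
              omega)
        refine ⟨K', hK'K.trans ((sep_subset _ _).trans ((sep_subset _ _).trans hMJ)),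
          hK'k, fun β => if β ∈ J₀ then true else y' β, ?_, ?_⟩
        · refine hdown _ (hpair _ hJ₀I _ hy'I) _ ?_
          intro β hβ
          have hβ' : (if β ∈ J₀ then true else y' β) = true := hβ
          by_cases h : β ∈ J₀
          · exact Or.inl h
          · rw [if_neg h] at hβ'
            exact Or.inr hβ'
        · intro α hα β hβ
          have hαK : α ∈ K := hK'K hα
          by_cases h : β = b α
          · subst h
            show (if b α ∈ J₀ then true else y' (b α)) = x α (b α)
            rw [if_pos hαK.2]
            exact ((hbspec α hαK.1).2).symm
          · have hβJ₀ : β ∉ J₀ := by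
              intro hmem
              obtain ⟨α'', hα'', hEq⟩ := hJ₀S hmem
              have hβs'' : β ∈ s α'' := hEq ▸ (hbspec α'' hα'').1
              by_cases hEqα : α = α''
              · exact h (by rw [hEqα]; exact hEq.symm)
              · exact Finset.disjoint_left.1 (hMdis hαK.1.1 hα''.1 hEqα) hβ hβs''
            show (if β ∈ J₀ then true else y' β) = x α β
            rw [if_neg hβJ₀]
            exact hagr α hα β (Finset.mem_erase.2 ⟨h, hβ⟩)

theorem stmt_12 (k : Cardinal.{u}) (hk : k.IsRegular) (huncount : ℵ₀ < k)
    (I : Set (Set k.out))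
    (hproper : Set.univ ∉ I)
    (hdown : ∀ A ∈ I, ∀ B ⊆ A, B ∈ I)
    (hcomplete : ∀ 𝒮 ⊆ I, #𝒮 < k → ⋃₀ 𝒮 ∈ I)
    (hsmall : ∀ A : Set k.out, #A < k → A ∈ I)
    (htall : ∀ S : Set k.out, #S = k → ∃ J ∈ I, J ⊆ S ∧ #J = k) :
    ∀ U : k.out → Set {x : k.out → Bool // {α | x α = true} ∈ I},
      (∀ α, IsOpen (U α) ∧ (U α).Nonempty) →
      ∃ J : Set k.out, #J = k ∧ (⋂ α ∈ J, U α).Nonempty := by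
  intro U hU
  classical
  choose p hp using fun α => (hU α).2
  have hnbhd : ∀ α, ∃ F : Finset k.out, ∀ z : {x : k.out → Bool // {α | x α = true} ∈ I},
      (∀ β ∈ F, z.val β = (p α).val β) → z ∈ U α := by
    intro α
    obtain ⟨V, hV, hVU⟩ := isOpen_induced_iff.1 (hU α).1
    have hpV : (p α).val ∈ V := by
      have := hp α
      rw [← hVU] at this
      exact this
    obtain ⟨F, u, hu, hsub⟩ := isOpen_pi_iff.1 hV _ hpV
    refine ⟨F, fun z hz => ?_⟩
    have hzV : z.val ∈ V := by
      apply hsub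
      intro β hβ
      rw [hz β (Finset.mem_coe.1 hβ)]
      exact (hu β (Finset.mem_coe.1 hβ)).2
    rw [← hVU]
    exact hzV
  choose F hF using hnbhd
  have hpair : ∀ A ∈ I, ∀ B ∈ I, A ∪ B ∈ I := by
    intro A hA B hB
    have hs : ⋃₀ ({A, B} : Set (Set k.out)) = A ∪ B := sUnion_pair A B
    rw [← hs]
    refine hcomplete _ ?_ ?_
    · intro C hC
      rcases hC with h | h
      · rw [h]; exact hA
      · rw [mem_singleton_iff.1 h]; exact hB
    · exact ((Set.finite_singleton B).insert A).lt_aleph0.trans huncount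
  have hJuniv : #(Set.univ : Set k.out) = k := by rw [mk_univ, Cardinal.mk_out]
  obtain ⟨n, hn⟩ := pigeon hk huncount Set.univ hJuniv (fun α => (F α).card)
  obtain ⟨J', hJ'sub, hJ'k, y, hyI, hagr⟩ :=
    core hk huncount hdown hpair hsmall htall n
      ({α ∈ (Set.univ : Set k.out) | (F α).card ≤ n} : Set k.out) F (fun α => (p α).val) hn
      (fun α hα => hα.2)
  refine ⟨J', hJ'k, ⟨⟨y, hyI⟩, ?_⟩⟩
  rw [mem_iInter₂]
  intro α hα
  exact hF α ⟨y, hyI⟩ (fun β hβ => hagr α hα β hβ)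
end

section
/- Let κ be an uncountable regular cardinal and ℐ a κ-complete proper ideal on κ containing all subsets of size < κ. Then for every λ < κ, (κ, λ) is not a pinning down pair for the subspace Σ_ℐ(κ) = {x ∈ {0,1}^κ : supp(x) ∈ ℐ} of the Cantor cube. -/
open Cardinal Topology Set

universe u

theorem stmt_13 (k : Cardinal.{u}) (hk : k.IsRegular) (huncount : ℵ₀ < k)
    (I : Set (Set k.out))
    (hproper : Set.univ ∉ I)
    (hdown : ∀ A ∈ I, ∀ B ⊆ A, B ∈ I)
    (hcomplete : ∀ 𝒮 ⊆ I, #𝒮 < k → ⋃₀ 𝒮 ∈ I)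
    (hsmall : ∀ A : Set k.out, #A < k → A ∈ I) :
    ∀ lam : Cardinal.{u}, lam < k →
      ¬ PinningDownPair {x : k.out → Bool // {α | x α = true} ∈ I} k lam := by
  classical
  intro lam hlam h
  set X := {x : k.out → Bool // {α | x α = true} ∈ I} with hX
  set U : k.out → Set X := fun i => {x : X | x.1 i = true} with hUdef
  have hopen : ∀ i, IsOpen (U i) ∧ (U i).Nonempty := by
    intro i
    constructor
    · have hc : Continuous fun x : X => x.1 i :=
        (continuous_apply i).comp continuous_subtype_val
      exact (isOpen_discrete ({true} : Set Bool)).preimage hc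
    · have hmem : {α | (fun α => decide (α = i)) α = true} ∈ I := by
        have he : {α : k.out | decide (α = i) = true} = {i} := by
          ext α; simp
        rw [show {α | (fun α => decide (α = i)) α = true}
              = {α : k.out | decide (α = i) = true} from rfl, he]
        exact hsmall _ (by simpa using one_lt_aleph0.trans huncount)
      exact ⟨⟨fun α => decide (α = i), hmem⟩, by simp [U]⟩
  have hcard𝒰 : #(Set.range U) ≤ k := by
    refine (Cardinal.mk_range_le).trans ?_
    simp [Cardinal.mk_out]
  obtain ⟨B, hBcard, hBmeet⟩ := h (Set.range U)
    (by rintro _ ⟨i, rfl⟩; exact hopen i) hcard𝒰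
  set 𝒮 : Set (Set k.out) := (fun x : X => {α | x.1 α = true}) '' B with h𝒮
  have h𝒮sub : 𝒮 ⊆ I := by rintro _ ⟨x, _, rfl⟩; exact x.2
  have h𝒮card : #𝒮 < k := lt_of_le_of_lt (Cardinal.mk_image_le.trans hBcard) hlam
  have hunion : ⋃₀ 𝒮 ∈ I := hcomplete 𝒮 h𝒮sub h𝒮card
  have hne : ⋃₀ 𝒮 ≠ Set.univ := fun he => hproper (he ▸ hunion)
  obtain ⟨i, hi⟩ := (Set.ne_univ_iff_exists_notMem _).1 hne
  obtain ⟨x, hxB, hxU⟩ := hBmeet (U i) ⟨i, rfl⟩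
  exact hi ⟨{α | x.1 α = true}, ⟨x, hxB, rfl⟩, hxU⟩
end

section
/- For every infinite cardinal λ, the set X = {0,1}^{2^λ} with the topology τ = {U \ A : U open in the product topology, |A| ≤ λ} is a Urysohn space in which every subset of cardinality λ is closed, (κ,λ) is a pinning down pair for X for every κ < 2^{2^λ}, and d(X) = λ⁺. -/
open Cardinal Topology Set

universe u

namespace Stmt14Aux

noncomputable section

variable {I : Type u}

/-- Pointwise xor-translation on the Cantor cube. -/
def xorP (a : I → Bool) (w : I → Bool) : I → Bool := fun i => xor (w i) (a i)

lemma xorP_invol (a w : I → Bool) : xorP a (xorP a w) = w := by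
  funext i
  cases h1 : w i <;> cases h2 : a i <;> simp [xorP, h1, h2]

lemma xorP_cancel (a d : I → Bool) : xorP (xorP a d) d = a := by
  funext i
  cases h1 : a i <;> cases h2 : d i <;> simp [xorP, h1, h2]

lemma continuous_xorP (a : I → Bool) : Continuous (xorP a) :=
  continuous_pi fun i =>
    (continuous_of_discreteTopology (f := fun b : Bool => xor b (a i))).comp (continuous_apply i)

lemma dense_xorP {D : Set (I → Bool)} (hD : Dense D) (a : I → Bool) :
    Dense (xorP a '' D) := by
  rw [dense_iff_inter_open] at hD ⊢
  intro U hU hne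
  obtain ⟨x, hx⟩ := hne
  have hU' : IsOpen (xorP a ⁻¹' U) := hU.preimage (continuous_xorP a)
  have hne' : (xorP a ⁻¹' U).Nonempty := by
    refine ⟨xorP a x, ?_⟩
    simp only [Set.mem_preimage, xorP_invol]
    exact hx
  obtain ⟨d, hdU, hdD⟩ := hD _ hU' hne'
  exact ⟨xorP a d, hdU, mem_image_of_mem _ hdD⟩

/-- Hewitt–Marczewski–Pondiczery-style dense set in `{0,1}^{2^λ}` of size `λ`. -/
lemma exists_dense (L : Type u) [Infinite L] (e : I ≃ (L → Bool)) :
    ∃ D : Set (I → Bool), #D ≤ #L ∧ Dense D := by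
  classical
  set pt : (F : Finset L) → (({ x // x ∈ F } → Bool) → Bool) → (I → Bool) :=
    fun F h i => h (fun j => e i j.1) with hpt
  refine ⟨⋃ F : Finset L, Set.range (pt F), ?_, ?_⟩
  · calc
      #(⋃ F : Finset L, Set.range (pt F)) ≤ #(Finset L) * ⨆ F : Finset L, #(Set.range (pt F)) :=
        mk_iUnion_le _
      _ ≤ #(Finset L) * ℵ₀ := by
        refine mul_le_mul' le_rfl (ciSup_le' fun F => mk_range_le.trans mk_le_aleph0)
      _ = #L * ℵ₀ := by rw [mk_finset_of_infinite]
      _ ≤ #L * #L := mul_le_mul' le_rfl (Cardinal.infinite_iff.mp ‹Infinite L›)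
      _ = #L := mul_eq_self (Cardinal.infinite_iff.mp ‹Infinite L›)
  · rw [dense_iff_inter_open]
    intro U hU hne
    obtain ⟨f, hf⟩ := hne
    obtain ⟨s0, u, hu, hsub⟩ := isOpen_pi_iff.mp hU f hf
    set g : I × I → Finset L := fun p =>
      if h : e p.1 ≠ e p.2 then {(Function.ne_iff.mp h).choose} else ∅ with hg
    set F : Finset L := (s0 ×ˢ s0).biUnion g with hF
    have sep : ∀ i ∈ s0, ∀ i' ∈ s0, (∀ j : { x // x ∈ F }, e i j.1 = e i' j.1) → i = i' := by
      intro i hi i' hi' hagree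
      by_contra hne'
      have hee : e i ≠ e i' := fun h => hne' (e.injective h)
      have hl := (Function.ne_iff.mp hee).choose_spec
      have hmem : (Function.ne_iff.mp hee).choose ∈ F := by
        refine Finset.mem_biUnion.mpr ⟨(i, i'), Finset.mem_product.mpr ⟨hi, hi'⟩, ?_⟩
        rw [hg]
        simp only
        rw [dif_pos hee]
        exact Finset.mem_singleton_self _
      exact hl (hagree ⟨_, hmem⟩)
    set h : ({ x // x ∈ F } → Bool) → Bool := fun g0 =>
      if hex : ∃ i, i ∈ s0 ∧ (fun j : { x // x ∈ F } => e i j.1) = g0 then f hex.choose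
      else false with hh
    have key : ∀ i ∈ s0, pt F h i = f i := by
      intro i hi
      have hex : ∃ i', i' ∈ s0 ∧
          (fun j : { x // x ∈ F } => e i' j.1) = (fun j : { x // x ∈ F } => e i j.1) :=
        ⟨i, hi, rfl⟩
      show h (fun j => e i j.1) = f i
      rw [hh]
      simp only
      rw [dif_pos hex]
      have hspec := hex.choose_spec
      have heq : hex.choose = i :=
        sep _ hspec.1 _ hi (fun j => congrFun hspec.2 j)
      rw [heq]
    refine ⟨pt F h, hsub ?_, mem_iUnion.mpr ⟨F, ⟨h, rfl⟩⟩⟩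
    intro i hi
    have hi' : i ∈ s0 := hi
    rw [key i hi']
    exact (hu i hi').2

/-- The predicate defining the refined topology. -/
def TOpen (lam : Cardinal.{u}) (I : Type u) (s : Set (I → Bool)) : Prop :=
  ∀ x ∈ s, ∃ U A : Set (I → Bool), IsOpen U ∧ x ∈ U ∧ #A ≤ lam ∧ x ∉ A ∧ U \ A ⊆ s

/-- The refinement of the product topology in which all sets of size `≤ λ` are closed. -/
def tau (lam : Cardinal.{u}) (hlam : ℵ₀ ≤ lam) (I : Type u) : TopologicalSpace (I → Bool) where
  IsOpen := TOpen lam I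
  isOpen_univ := fun x _ =>
    ⟨univ, ∅, isOpen_univ, mem_univ x, by rw [mk_emptyCollection]; exact zero_le,
      notMem_empty x, by simp⟩
  isOpen_inter := by
    intro s t hs ht x hx
    obtain ⟨U1, A1, hU1, hxU1, hA1, hxA1, hsub1⟩ := hs x hx.1
    obtain ⟨U2, A2, hU2, hxU2, hA2, hxA2, hsub2⟩ := ht x hx.2
    refine ⟨U1 ∩ U2, A1 ∪ A2, hU1.inter hU2, ⟨hxU1, hxU2⟩, ?_, ?_, ?_⟩
    · exact (mk_union_le _ _).trans ((add_le_add hA1 hA2).trans_eq (add_eq_self hlam))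
    · intro hmem
      rcases hmem with h | h
      · exact hxA1 h
      · exact hxA2 h
    · intro w hw
      exact ⟨hsub1 ⟨hw.1.1, fun h => hw.2 (Or.inl h)⟩, hsub2 ⟨hw.1.2, fun h => hw.2 (Or.inr h)⟩⟩
  isOpen_sUnion := by
    intro S hS x hx
    obtain ⟨s, hsS, hxs⟩ := hx
    obtain ⟨U, A, hU, hxU, hA, hxA, hsub⟩ := hS s hsS x hxs
    exact ⟨U, A, hU, hxU, hA, hxA, hsub.trans (subset_sUnion_of_mem hsS)⟩

lemma mk_fun_bool (J : Type u) : #(J → Bool) = 2 ^ #J := by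
  rw [Cardinal.mk_arrow, mk_bool, Cardinal.lift_uzero, Cardinal.lift_two]

lemma dense_tau_iff {lam : Cardinal.{u}} {hlam : ℵ₀ ≤ lam} {E : Set (I → Bool)} :
    @Dense _ (tau lam hlam I) E ↔
      ∀ V : Set (I → Bool), IsOpen[tau lam hlam I] V → V.Nonempty → (V ∩ E).Nonempty := by
  letI := tau lam hlam I
  exact dense_iff_inter_open

lemma isOpen_tau_iff {lam : Cardinal.{u}} {hlam : ℵ₀ ≤ lam} {s : Set (I → Bool)} :
    IsOpen[tau lam hlam I] s ↔ TOpen lam I s := Iff.rfl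

lemma isOpen_tau_of {lam : Cardinal.{u}} (hlam : ℵ₀ ≤ lam) {U : Set (I → Bool)}
    (hU : IsOpen U) : IsOpen[tau lam hlam I] U :=
  fun x hx => ⟨U, ∅, hU, hx, by rw [mk_emptyCollection]; exact zero_le,
    notMem_empty x, by simp⟩

lemma isOpen_tau_diff {lam : Cardinal.{u}} {hlam : ℵ₀ ≤ lam} {U A : Set (I → Bool)}
    (hU : IsOpen[tau lam hlam I] U) (hA : #A ≤ lam) : IsOpen[tau lam hlam I] (U \ A) := by
  rw [isOpen_tau_iff] at hU ⊢
  intro x hx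
  obtain ⟨U0, A0, hU0, hxU0, hA0, hxA0, hsub⟩ := hU x hx.1
  refine ⟨U0, A0 ∪ A, hU0, hxU0,
    (mk_union_le _ _).trans ((add_le_add hA0 hA).trans_eq (add_eq_self hlam)), ?_, ?_⟩
  · intro hmem
    rcases hmem with h | h
    · exact hxA0 h
    · exact hx.2 h
  · intro w hw
    exact ⟨hsub ⟨hw.1, fun h => hw.2 (Or.inl h)⟩, fun h => hw.2 (Or.inr h)⟩

lemma isClosed_tau_small {lam : Cardinal.{u}} (hlam : ℵ₀ ≤ lam) {A : Set (I → Bool)}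
    (hA : #A ≤ lam) : IsClosed[tau lam hlam I] A := by
  have hopen : IsOpen[tau lam hlam I] Aᶜ := by
    rw [isOpen_tau_iff]
    intro x hx
    exact ⟨univ, A, isOpen_univ, mem_univ x, hA, hx, fun w hw => hw.2⟩
  letI := tau lam hlam I
  exact isOpen_compl_iff.mp hopen

lemma t25_tau (lam : Cardinal.{u}) (hlam : ℵ₀ ≤ lam) :
    @T25Space (I → Bool) (tau lam hlam I) := by
  have sep : ∀ x y : I → Bool, x ≠ y → ∃ P : Set (I → Bool),
      IsOpen[tau lam hlam I] P ∧ IsOpen[tau lam hlam I] Pᶜ ∧ x ∈ P ∧ y ∈ Pᶜ := by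
    intro x y hxy
    obtain ⟨c, hc⟩ := Function.ne_iff.mp hxy
    have hPo : IsOpen ((fun w : I → Bool => w c) ⁻¹' {x c}) :=
      (continuous_apply c).isOpen_preimage _ (isOpen_discrete _)
    have hPco : IsOpen ((fun w : I → Bool => w c) ⁻¹' ({x c}ᶜ)) :=
      (continuous_apply c).isOpen_preimage _ (isOpen_discrete _)
    refine ⟨(fun w : I → Bool => w c) ⁻¹' {x c}, isOpen_tau_of hlam hPo,
      isOpen_tau_of hlam ?_, rfl, fun hmem => hc (Set.mem_singleton_iff.mp hmem).symm⟩
    rw [← Set.preimage_compl]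
    exact hPco
  letI := tau lam hlam I
  refine { t2_5 := ?_ }
  intro x y hxy
  obtain ⟨P, h1, h2, hxP, hyP⟩ := sep x y hxy
  have hPcl : IsClosed P := ⟨h2⟩
  have hPccl : IsClosed Pᶜ := ⟨(compl_compl P).symm ▸ h1⟩
  refine Filter.disjoint_of_disjoint_of_mem ?_
    (Filter.mem_lift' (h1.mem_nhds hxP))
    (Filter.mem_lift' (h2.mem_nhds hyP))
  rw [hPcl.closure_eq, hPccl.closure_eq]
  exact disjoint_compl_right

end

end Stmt14Aux

open Stmt14Aux

theorem stmt_14 (lam : Cardinal.{u}) (hlam : ℵ₀ ≤ lam) :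
    ∃ t : TopologicalSpace (((2 : Cardinal.{u}) ^ lam).out → Bool),
      (∀ s : Set (((2 : Cardinal.{u}) ^ lam).out → Bool),
          IsOpen[t] s ↔ ∃ U A : Set (((2 : Cardinal.{u}) ^ lam).out → Bool), IsOpen U ∧ #A ≤ lam ∧ s = U \ A) ∧
      @T25Space _ t ∧
      (∀ s : Set (((2 : Cardinal.{u}) ^ lam).out → Bool), #s = lam → IsClosed[t] s) ∧
      (∀ k : Cardinal.{u}, k < ((2 : Cardinal.{u}) ^ ((2 : Cardinal.{u}) ^ lam)) → @PinningDownPair _ t k lam) ∧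
      (∃ D, @Dense _ t D ∧ #D = Order.succ lam) ∧
      (∀ D, @Dense _ t D → Order.succ lam ≤ #D) := by
  classical
  set I : Type u := ((2 : Cardinal.{u}) ^ lam).out with hIdef
  have hI : #I = 2 ^ lam := mk_out _
  haveI hinfL : Infinite lam.out := Cardinal.infinite_iff.mpr (by rw [mk_out]; exact hlam)
  have hcard_fun : #(lam.out → Bool) = 2 ^ lam := by
    rw [mk_fun_bool, mk_out]
  have hIeq : #I = #(lam.out → Bool) := by rw [hI, hcard_fun]
  obtain ⟨e⟩ := Cardinal.eq.mp hIeq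
  obtain ⟨D, hDle, hDdense⟩ := exists_dense lam.out e
  rw [mk_out] at hDle
  have hXbig : #(I → Bool) = 2 ^ ((2 : Cardinal.{u}) ^ lam) := by
    rw [mk_fun_bool, hI]
  have hlam_lt : lam < 2 ^ ((2 : Cardinal.{u}) ^ lam) :=
    (cantor lam).trans (cantor _)
  have hbig : ℵ₀ ≤ 2 ^ ((2 : Cardinal.{u}) ^ lam) := hlam.trans hlam_lt.le
  -- lower bound on density (used twice)
  have hlower : ∀ Dd : Set (I → Bool), @Dense _ (tau lam hlam I) Dd →
      Order.succ lam ≤ #Dd := by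
    intro Dd hDd
    rw [Order.succ_le_iff]
    by_contra hle
    rw [not_lt] at hle
    have hcl : IsClosed[tau lam hlam I] Dd := isClosed_tau_small hlam hle
    have hopen : IsOpen[tau lam hlam I] Ddᶜ := hcl.isOpen_compl
    have hne : Ddᶜ.Nonempty := by
      by_contra hcne
      rw [Set.not_nonempty_iff_eq_empty, compl_empty_iff] at hcne
      rw [hcne, mk_univ, hXbig] at hle
      exact absurd hle (not_le.mpr hlam_lt)
    obtain ⟨w, hw⟩ := (dense_tau_iff.mp hDd) Ddᶜ hopen hne
    exact hw.1 hw.2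
  refine ⟨tau lam hlam I, ?_, t25_tau lam hlam, ?_, ?_, ?_, hlower⟩
  · -- characterization of open sets
    intro s
    constructor
    · intro hs
      exact ⟨s, ∅, hs, by rw [mk_emptyCollection]; exact zero_le, (diff_empty).symm⟩
    · rintro ⟨U, A, hU, hA, rfl⟩
      exact isOpen_tau_diff hU hA
  · -- sets of size lam are closed
    intro s hs
    exact isClosed_tau_small hlam (le_of_eq hs)
  · -- pinning down pairs
    intro k hk 𝒰 h𝒰 hUcard
    have hchoice : ∀ s : ↥𝒰, ∃ U A : Set (I → Bool),
        IsOpen U ∧ #A ≤ lam ∧ U \ A ⊆ (s : Set (I → Bool)) ∧ (U \ A).Nonempty := by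
      rintro ⟨s, hs⟩
      obtain ⟨ho, hne⟩ := h𝒰 s hs
      obtain ⟨x, hx⟩ := hne
      obtain ⟨U, A, hUo, hxU, hA, hxA, hsub⟩ := (isOpen_tau_iff.mp ho) x hx
      exact ⟨U, A, hUo, hA, hsub, ⟨x, hxU, hxA⟩⟩
    choose U A hUo hA hsub hne using hchoice
    set A' : Set (I → Bool) := ⋃ s : ↥𝒰, A s with hA'def
    have hA'lt : #A' < 2 ^ ((2 : Cardinal.{u}) ^ lam) := by
      have h1 : #A' ≤ #↥𝒰 * ⨆ s : ↥𝒰, #(A s) := mk_iUnion_le _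
      have h2 : #↥𝒰 * ⨆ s : ↥𝒰, #(A s) ≤ k * lam := mul_le_mul' hUcard (ciSup_le' hA)
      exact (h1.trans h2).trans_lt (mul_lt_of_lt hbig hk hlam_lt)
    have hBadlt : #(Set.image2 (fun d b => xorP b d) D A') < 2 ^ ((2 : Cardinal.{u}) ^ lam) :=
      mk_image2_le.trans_lt (mul_lt_of_lt hbig (hDle.trans_lt hlam_lt) hA'lt)
    have hex : ∃ a : I → Bool, a ∉ Set.image2 (fun d b => xorP b d) D A' := by
      by_contra hcon
      push_neg at hcon
      have hsubu : (univ : Set (I → Bool)) ⊆ Set.image2 (fun d b => xorP b d) D A' :=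
        fun a _ => hcon a
      have := mk_le_mk_of_subset hsubu
      rw [mk_univ, hXbig] at this
      exact absurd this (not_le.mpr hBadlt)
    obtain ⟨a, ha⟩ := hex
    refine ⟨xorP a '' D, mk_image_le.trans hDle, ?_⟩
    intro s hs
    have hdense' := dense_xorP hDdense a
    have hUne : (U ⟨s, hs⟩).Nonempty := (hne ⟨s, hs⟩).mono diff_subset
    obtain ⟨w, hwU, hwD⟩ := (dense_iff_inter_open.mp hdense') (U ⟨s, hs⟩) (hUo _) hUne
    have hwA' : w ∉ A' := by
      intro hmem
      obtain ⟨d, hd, rfl⟩ := hwD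
      exact ha (Set.mem_image2.mpr ⟨d, hd, xorP a d, hmem, xorP_cancel a d⟩)
    have hws : w ∈ s :=
      hsub ⟨s, hs⟩ ⟨hwU, fun hmem => hwA' (mem_iUnion.mpr ⟨⟨s, hs⟩, hmem⟩)⟩
    exact ⟨w, hwD, hws⟩
  · -- dense set of size succ lam
    set P : Type u := (Order.succ lam).out with hPdef
    have hPcard : #P = Order.succ lam := mk_out _
    have hPle : #P ≤ #(I → Bool) := by
      rw [hPcard, hXbig]
      exact Order.succ_le_iff.mpr hlam_lt
    obtain ⟨ι⟩ := (Cardinal.le_def _ _).mp hPle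
    set D' : Set (I → Bool) := ⋃ p : P, xorP (ι p) '' D with hD'def
    have hupper : #D' ≤ Order.succ lam := by
      calc
        Cardinal.mk D' ≤ #P * ⨆ p : P, #(xorP (ι p) '' D) := mk_iUnion_le _
        _ ≤ Order.succ lam * lam :=
          mul_le_mul' (le_of_eq hPcard) (ciSup_le' fun p => mk_image_le.trans hDle)
        _ = Order.succ lam := by
          rw [mul_eq_max (hlam.trans (Order.le_succ lam)) hlam]
          exact max_eq_left (Order.le_succ lam)
    have hdense : @Dense _ (tau lam hlam I) D' := by
      rw [dense_tau_iff]
      intro V hV hVne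
      obtain ⟨x, hx⟩ := hVne
      obtain ⟨Uv, Av, hUo, hxU, hAle, hxA, hsub⟩ := (isOpen_tau_iff.mp hV) x hx
      have hBadle : #(Set.image2 (fun d b => xorP b d) D Av) ≤ lam :=
        mk_image2_le.trans ((mul_le_mul' hDle hAle).trans_eq (mul_eq_self hlam))
      have hexp : ∃ p : P, ι p ∉ Set.image2 (fun d b => xorP b d) D Av := by
        by_contra hcon
        push_neg at hcon
        have hsubr : Set.range ι ⊆ Set.image2 (fun d b => xorP b d) D Av :=
          range_subset_iff.mpr hcon
        have hle2 := mk_le_mk_of_subset hsubr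
        rw [mk_range_eq _ ι.injective, hPcard] at hle2
        exact absurd (hle2.trans hBadle) (not_le.mpr (Order.lt_succ lam))
      obtain ⟨p, hp⟩ := hexp
      have hdense' := dense_xorP hDdense (ι p)
      obtain ⟨w, hwU, hwD⟩ :=
        (dense_iff_inter_open.mp hdense') Uv hUo ⟨x, hxU⟩
      have hwA : w ∉ Av := by
        intro hmem
        obtain ⟨d, hd, rfl⟩ := hwD
        exact hp (Set.mem_image2.mpr ⟨d, hd, xorP (ι p) d, hmem, xorP_cancel (ι p) d⟩)
      exact ⟨w, hsub ⟨hwU, hwA⟩, mem_iUnion.mpr ⟨p, hwD⟩⟩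
    exact ⟨D', hdense, le_antisymm hupper (hlower D' hdense)⟩
end

section
/- Let ℐ be a proper ideal on ω containing all finite sets, and let 𝒱 ⊆ ℐ⁺ (the ℐ-positive sets), 𝒟 = {D_n : n < ω} ⊆ ℐ, and 𝒞 = {⟨x_n, C_n⟩ : n < ω} ⊆ ω × ℐ be countable families such that C_n ∩ D_m is finite for all n,m, and C_n ∩ C_m is finite whenever x_n ≠ x_m. Then there is E ⊆ ω such that: (i) |V ∩ E| = |V \ E| = ω for all V ∈ 𝒱; (ii) x_n ∈ E implies C_n ⊆* E and x_n ∉ E implies C_n ∩ E is finite; (iii) D_n ∩ E is finite for all n. -/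
open Cardinal Topology Set

universe u

theorem stmt_16 (I : Set (Set ℕ))
    (hproper : Set.univ ∉ I)
    (hdown : ∀ A ∈ I, ∀ B ⊆ A, B ∈ I)
    (hunion : ∀ A ∈ I, ∀ B ∈ I, A ∪ B ∈ I)
    (hfin : ∀ A : Set ℕ, A.Finite → A ∈ I)
    (V : Set (Set ℕ)) (hV : V.Countable) (hVpos : ∀ v ∈ V, v ∉ I)
    (D : ℕ → Set ℕ) (hD : ∀ n, D n ∈ I)
    (x : ℕ → ℕ) (C : ℕ → Set ℕ) (hC : ∀ n, C n ∈ I)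
    (hCD : ∀ n m, (C n ∩ D m).Finite)
    (hCC : ∀ n m, x n ≠ x m → (C n ∩ C m).Finite) :
    ∃ E : Set ℕ,
      (∀ v ∈ V, (v ∩ E).Infinite ∧ (v \ E).Infinite) ∧
      (∀ n, (x n ∈ E → (C n \ E).Finite) ∧ (x n ∉ E → (C n ∩ E).Finite)) ∧
      (∀ n, (D n ∩ E).Finite) := by
  classical
  -- enumerate V (padding with univ if empty)
  obtain ⟨f, hfpos, hfsur⟩ : ∃ f : ℕ → Set ℕ, (∀ i, f i ∉ I) ∧ ∀ v ∈ V, ∃ i, f i = v := by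
    rcases V.eq_empty_or_nonempty with h | h
    · exact ⟨fun _ => Set.univ, fun _ => hproper, by simp [h]⟩
    · obtain ⟨f, hf⟩ := Set.Countable.exists_eq_range hV h
      refine ⟨f, fun i => hVpos _ (hf ▸ Set.mem_range_self i), fun v hv => ?_⟩
      rw [hf] at hv
      exact hv
  -- finite unions stay in the ideal
  have hIdeal : ∀ (s : Finset ℕ) (g : ℕ → Set ℕ), (∀ m, g m ∈ I) → (⋃ m ∈ s, g m) ∈ I := by
    intro s g hg
    induction s using Finset.induction with
    | empty => simpa using hfin ∅ Set.finite_empty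
    | @insert m s hm ih =>
      rw [Finset.set_biUnion_insert]
      exact hunion _ (hg _) _ ih
  set W : ℕ → Set ℕ := fun t => ⋃ m ∈ Finset.range (t + 1), (C m ∪ D m) with hWdef
  have hWI : ∀ t, W t ∈ I := fun t =>
    hIdeal _ _ fun m => hunion _ (hC m) _ (hD m)
  have hdiffInf : ∀ v, v ∉ I → ∀ S ∈ I, (v \ S).Infinite := by
    intro v hv S hS
    by_contra hcon
    rw [Set.not_infinite] at hcon
    apply hv
    have : v ⊆ S ∪ (v \ S) := by
      intro a ha
      by_cases h : a ∈ S
      · exact Or.inl h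
      · exact Or.inr ⟨ha, h⟩
    exact hdown _ (hunion _ hS _ (hfin _ hcon)) _ this
  -- the picking function
  have hpick : ∀ t b, ∃ a, b < a ∧ a ∈ f ((Nat.unpair (t / 2)).1) ∧ a ∉ W t := by
    intro t b
    obtain ⟨a, ha, hab⟩ := (hdiffInf _ (hfpos ((Nat.unpair (t / 2)).1)) _ (hWI t)).exists_gt b
    exact ⟨a, hab, ha.1, ha.2⟩
  choose F hFlt hFmem hFW using hpick
  set h : ℕ → ℕ := fun t => Nat.rec (F 0 0) (fun t ih => F (t + 1) ih) t with hhdef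
  have hsucc : ∀ t, h (t + 1) = F (t + 1) (h t) := fun t => rfl
  have hmono : StrictMono h := strictMono_nat_of_lt_succ fun t => by
    rw [hsucc]; exact hFlt (t + 1) (h t)
  have hmem : ∀ t, h t ∈ f ((Nat.unpair (t / 2)).1) := by
    intro t
    cases t with
    | zero => exact hFmem 0 0
    | succ t => rw [hsucc]; exact hFmem (t + 1) (h t)
  have hWmem : ∀ t, h t ∉ W t := by
    intro t
    cases t with
    | zero => exact hFW 0 0
    | succ t => rw [hsucc]; exact hFW (t + 1) (h t)
  have hhC : ∀ t n, h t ∈ C n → t < n := by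
    intro t n htn
    by_contra hle
    push_neg at hle
    exact hWmem t (Set.mem_biUnion (Finset.mem_range.2 (Nat.lt_succ_of_le hle)) (Or.inl htn))
  have hhD : ∀ t n, h t ∈ D n → t < n := by
    intro t n htn
    by_contra hle
    push_neg at hle
    exact hWmem t (Set.mem_biUnion (Finset.mem_range.2 (Nat.lt_succ_of_le hle)) (Or.inr htn))
  set A : Set ℕ := h '' {t | Even t} with hAdef
  set A2 : Set ℕ := h '' {t | ¬ Even t} with hA2def
  have hAC : ∀ n, (A ∩ C n).Finite := by
    intro n
    apply ((Set.finite_Iio n).image h).subset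
    rintro k ⟨⟨t, _, rfl⟩, hkC⟩
    exact ⟨t, hhC t n hkC, rfl⟩
  have hA2C : ∀ n, (A2 ∩ C n).Finite := by
    intro n
    apply ((Set.finite_Iio n).image h).subset
    rintro k ⟨⟨t, _, rfl⟩, hkC⟩
    exact ⟨t, hhC t n hkC, rfl⟩
  have hAD : ∀ n, (A ∩ D n).Finite := by
    intro n
    apply ((Set.finite_Iio n).image h).subset
    rintro k ⟨⟨t, _, rfl⟩, hkD⟩
    exact ⟨t, hhD t n hkD, rfl⟩
  -- least index function
  set m₀ : ℕ → ℕ := fun k => sInf {m | k ∈ C m} with hm₀def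
  have hm₀mem : ∀ k n, k ∈ C n → k ∈ C (m₀ k) := fun k n hk =>
    Nat.sInf_mem (s := {m | k ∈ C m}) ⟨n, hk⟩
  have hm₀le : ∀ k n, k ∈ C n → m₀ k ≤ n := fun k n hk => Nat.sInf_le hk
  -- the monotone operator and its least fixed point
  set Φ : Set ℕ →o Set ℕ :=
    ⟨fun S => A ∪ {k | k ∉ A2 ∧ k ∈ C (m₀ k) ∧ x (m₀ k) ∈ S ∧ ∀ j ≤ m₀ k, k ∉ D j},
     fun S T hST => Set.union_subset_union_right _ fun k hk =>
       ⟨hk.1, hk.2.1, hST hk.2.2.1, hk.2.2.2⟩⟩ with hΦdef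
  set E : Set ℕ := OrderHom.lfp Φ with hEdef
  have hfix : A ∪ {k | k ∉ A2 ∧ k ∈ C (m₀ k) ∧ x (m₀ k) ∈ E ∧ ∀ j ≤ m₀ k, k ∉ D j} = E :=
    OrderHom.map_lfp Φ
  have hAE : A ⊆ E := by
    rw [← hfix]; exact Set.subset_union_left
  have hA2E : ∀ k ∈ A2, k ∉ E := by
    rintro k ⟨t, ht, rfl⟩ hkE
    rw [← hfix] at hkE
    rcases hkE with ⟨s, hs, heq⟩ | hT
    · exact ht (hmono.injective heq ▸ hs)
    · exact hT.1 ⟨t, ht, rfl⟩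
  refine ⟨E, ?_, ?_, ?_⟩
  · -- splitting
    intro v hv
    obtain ⟨i, rfl⟩ := hfsur v hv
    constructor
    · apply Set.infinite_of_injective_forall_mem
        (f := fun j => h (2 * Nat.pair i j))
      · intro j₁ j₂ hj
        simp only at hj
        have h2 : 2 * Nat.pair i j₁ = 2 * Nat.pair i j₂ := hmono.injective hj
        have h3 : Nat.pair i j₁ = Nat.pair i j₂ := by omega
        exact (Nat.pair_eq_pair.1 h3).2
      · intro j
        have hdiv : (2 * Nat.pair i j) / 2 = Nat.pair i j := by omega
        have hm := hmem (2 * Nat.pair i j)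
        rw [hdiv, Nat.unpair_pair] at hm
        exact ⟨hm, hAE ⟨2 * Nat.pair i j, ⟨Nat.pair i j, by omega⟩, rfl⟩⟩
    · apply Set.infinite_of_injective_forall_mem
        (f := fun j => h (2 * Nat.pair i j + 1))
      · intro j₁ j₂ hj
        simp only at hj
        have h2 : 2 * Nat.pair i j₁ + 1 = 2 * Nat.pair i j₂ + 1 := hmono.injective hj
        have h3 : Nat.pair i j₁ = Nat.pair i j₂ := by omega
        exact (Nat.pair_eq_pair.1 h3).2
      · intro j
        have hdiv : (2 * Nat.pair i j + 1) / 2 = Nat.pair i j := by omega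
        have hm := hmem (2 * Nat.pair i j + 1)
        rw [hdiv, Nat.unpair_pair] at hm
        refine ⟨hm, hA2E _ ⟨2 * Nat.pair i j + 1, ?_, rfl⟩⟩
        simp [Nat.even_add_one, parity_simps]
  · -- coherence
    intro n
    constructor
    · intro hxn
      have hcover : C n \ E ⊆ (A2 ∩ C n) ∪
          (⋃ m ∈ Finset.range (n + 1), (if x m = x n then (∅ : Set ℕ) else C n ∩ C m)) ∪
          (⋃ j ∈ Finset.range (n + 1), C n ∩ D j) := by
        rintro k ⟨hkC, hkE⟩
        have hk0 : k ∈ C (m₀ k) := hm₀mem k n hkC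
        have hkle : m₀ k ≤ n := hm₀le k n hkC
        have hkT : ¬ (k ∉ A2 ∧ k ∈ C (m₀ k) ∧ x (m₀ k) ∈ E ∧ ∀ j ≤ m₀ k, k ∉ D j) := by
          intro hT
          exact hkE (hfix ▸ Or.inr hT)
        push_neg at hkT
        by_cases hA2k : k ∈ A2
        · exact Or.inl (Or.inl ⟨hA2k, hkC⟩)
        by_cases hxE : x (m₀ k) ∈ E
        · obtain ⟨j, hjle, hjD⟩ := hkT hA2k hk0 hxE
          exact Or.inr (Set.mem_biUnion (Finset.mem_range.2 (Nat.lt_succ_of_le (hjle.trans hkle))) ⟨hkC, hjD⟩)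
        · refine Or.inl (Or.inr (Set.mem_biUnion (Finset.mem_range.2 (Nat.lt_succ_of_le hkle)) ?_))
          have hne : x (m₀ k) ≠ x n := fun h => hxE (h ▸ hxn)
          rw [if_neg hne]
          exact ⟨hkC, hk0⟩
      refine (Set.Finite.union (Set.Finite.union ((hA2C n).subset (by intro k hk; exact ⟨hk.1, hk.2⟩)) ?_) ?_).subset hcover
      · apply Set.Finite.biUnion (Finset.finite_toSet _)
        intro m _
        by_cases hxm : x m = x n
        · simp [hxm]
        · rw [if_neg hxm]
          exact hCC n m fun h => hxm h.symm
      · exact Set.Finite.biUnion (Finset.finite_toSet _) fun j _ => hCD n j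
    · intro hxn
      have hcover : C n ∩ E ⊆ (A ∩ C n) ∪
          (⋃ m ∈ Finset.range (n + 1), (if x m = x n then (∅ : Set ℕ) else C n ∩ C m)) := by
        rintro k ⟨hkC, hkE⟩
        rw [← hfix] at hkE
        rcases hkE with hkA | ⟨_, hk0, hxE, _⟩
        · exact Or.inl ⟨hkA, hkC⟩
        · have hkle : m₀ k ≤ n := hm₀le k n hkC
          refine Or.inr (Set.mem_biUnion (Finset.mem_range.2 (Nat.lt_succ_of_le hkle)) ?_)
          have hne : x (m₀ k) ≠ x n := fun h => hxn (h ▸ hxE)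
          rw [if_neg hne]
          exact ⟨hkC, hk0⟩
      refine (Set.Finite.union ((hAC n).subset (by intro k hk; exact ⟨hk.1, hk.2⟩)) ?_).subset hcover
      apply Set.Finite.biUnion (Finset.finite_toSet _)
      intro m _
      by_cases hxm : x m = x n
      · simp [hxm]
      · rw [if_neg hxm]
        exact hCC n m fun h => hxm h.symm
  · -- almost avoiding D
    intro j
    have hcover : D j ∩ E ⊆ (A ∩ D j) ∪ (⋃ m ∈ Finset.range j, C m ∩ D j) := by
      rintro k ⟨hkD, hkE⟩
      rw [← hfix] at hkE
      rcases hkE with hkA | ⟨_, hk0, _, hDcl⟩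
      · exact Or.inl ⟨hkA, hkD⟩
      · have hlt : m₀ k < j := by
          by_contra hle
          push_neg at hle
          exact hDcl j hle hkD
        exact Or.inr (Set.mem_biUnion (Finset.mem_range.2 hlt) ⟨hk0, hkD⟩)
    refine (Set.Finite.union ((hAD j).subset fun k hk => ⟨hk.1, hk.2⟩) ?_).subset hcover
    exact Set.Finite.biUnion (Finset.finite_toSet _) fun m _ => hCD m j
end

section
/- If (λ⁺, λ) is a dominating pair for a λ-monolithic space X, then d(X) ≤ λ. -/
open Cardinal Topology Set

universe u

/-- `N` is a network on the subspace `A`: a family of subsets of `A` such that every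
relative open neighborhood of a point of `A` contains a member of `N` containing the point. -/
def IsNetworkOn {X : Type u} [TopologicalSpace X] (A : Set X) (N : Set (Set X)) : Prop :=
  (∀ s ∈ N, s ⊆ A) ∧
  ∀ x ∈ A, ∀ U : Set X, IsOpen U → x ∈ U → ∃ s ∈ N, x ∈ s ∧ s ⊆ U

theorem stmt_17 {X : Type u} [TopologicalSpace X] (lam : Cardinal.{u}) (hlam : ℵ₀ ≤ lam)
    (hmono : ∀ Y : Set X, #Y ≤ lam → ∃ N : Set (Set X), #N ≤ lam ∧ IsNetworkOn (closure Y) N)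
    (hdom : DominatingPair X (Order.succ lam) lam) :
    ∃ D : Set X, Dense D ∧ #D ≤ lam := by
  classical
  by_contra hcon
  push_neg at hcon
  have key : ∀ S : Set X, #S ≤ lam → ∃ x, x ∉ closure S := by
    intro S hS
    by_contra hc
    push_neg at hc
    have hd : Dense S := fun x => hc x
    exact absurd hS (not_le.2 (hcon S hd))
  choose pick hpick using key
  set ι := (Order.succ lam).ord.ToType with hι
  have wf : WellFounded ((· < ·) : ι → ι → Prop) :=
    (inferInstance : WellFoundedLT ι).wf
  have hIio : ∀ a : ι, #(Set.Iio a) ≤ lam :=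
    fun a => Order.lt_succ_iff.mp (Cardinal.mk_Iio_ord_toType a)
  let F : ι → X := wf.fix (fun a IH =>
    pick (Set.range fun b : Set.Iio a => IH b.1 b.2)
      (le_trans mk_range_le (hIio a)))
  have hFeq : ∀ a : ι, F a = pick (Set.range fun b : Set.Iio a => F b.1)
      (le_trans mk_range_le (hIio a)) := by
    intro a
    exact wf.fix_eq _ a
  have hF : ∀ a : ι, F a ∉ closure (F '' Set.Iio a) := by
    intro a
    rw [Set.image_eq_range, hFeq a]
    exact hpick _ _
  have hAcard : #(Set.range F) ≤ Order.succ lam := by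
    refine mk_range_le.trans ?_
    rw [hι, Cardinal.mk_toType, Cardinal.card_ord]
  obtain ⟨B, hB, hAB⟩ := hdom (Set.range F) hAcard
  obtain ⟨N, hN, hNsub, hNnet⟩ := hmono B hB
  have hFmem : ∀ a : ι, F a ∈ closure B := fun a => hAB (Set.mem_range_self a)
  have hs : ∀ a : ι, ∃ s ∈ N, F a ∈ s ∧ s ⊆ (closure (F '' Set.Iio a))ᶜ := by
    intro a
    exact hNnet (F a) (hFmem a) _ (isClosed_closure.isOpen_compl) (hF a)
  choose s hsN hsmem hssub using hs
  have hinj : Function.Injective (fun a : ι => (⟨s a, hsN a⟩ : N)) := by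
    intro a a' h
    simp only [Subtype.mk.injEq] at h
    by_contra hne
    rcases lt_or_gt_of_ne hne with hlt | hlt
    · have h1 : F a ∈ s a' := h ▸ hsmem a
      have h2 : F a ∈ closure (F '' Set.Iio a') :=
        subset_closure ⟨a, hlt, rfl⟩
      exact hssub a' h1 h2
    · have h1 : F a' ∈ s a := h ▸ hsmem a'
      have h2 : F a' ∈ closure (F '' Set.Iio a) :=
        subset_closure ⟨a', hlt, rfl⟩
      exact hssub a h1 h2
  have hle : Order.succ lam ≤ #N := by
    have := Cardinal.mk_le_of_injective hinj
    rwa [show #ι = Order.succ lam by rw [hι, Cardinal.mk_toType, Cardinal.card_ord]] at this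
  exact absurd (hle.trans hN) (not_le.2 (Order.lt_succ lam))
end
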